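/- arXiv:1510.01616 — 7 statements merged into one kernel-verified Lean document; each statement's English description precedes it below -/
import Mathlib

section
/- If the supremum defining a tropical power series T(x) = sup_{j ∈ E} (b_j + j·x) is finite at every point x ∈ ℝ, then for each x the supremum is attained, i.e., there exists j ∈ E with T(x) = b_j + j·x. -/
/-- If the supremum defining a tropical power series
`T(x) = sup_{j ∈ E} (b_j + j·x)` is finite at every point `x ∈ ℝ`, then for each `x`
the supremum is attained: there exists `j ∈ E` with `T(x) = b_j + j·x`. -/
theorem tropical_power_series_sup_attained (E : Set ℕ) (hE : E.Nonempty) (b : ℕ → ℝ)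
    (hfin : ∀ x : ℝ, BddAbove ((fun j : ℕ => b j + j * x) '' E)) :
    ∀ x : ℝ, ∃ j ∈ E,
      sSup ((fun j : ℕ => b j + j * x) '' E) = b j + j * x := by
  intro x
  obtain ⟨j0, hj0⟩ := hE
  set f : ℕ → ℝ := fun j : ℕ => b j + j * x with hf
  obtain ⟨M, hM⟩ := hfin (x + 1)
  have hbound : ∀ j ∈ E, f j ≤ M - j := by
    intro j hj
    have := hM (Set.mem_image_of_mem _ hj)
    simp only [hf]
    nlinarith [this]
  -- choose N so that for j > N in E, f j < f j0
  obtain ⟨N, hN⟩ := exists_nat_gt (M - f j0)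
  have hFsub : {j ∈ E | j ≤ N} ⊆ Set.Iic N := fun j hj => hj.2
  have hFfin : {j ∈ E | j ≤ N}.Finite := (Set.finite_Iic N).subset hFsub
  have hj0F : j0 ∈ {j ∈ E | j ≤ N} := by
    constructor
    · exact hj0
    · by_contra h
      push_neg at h
      have h1 : f j0 ≤ M - j0 := hbound j0 hj0
      have h2 : (N : ℝ) < j0 := by exact_mod_cast h
      linarith
  obtain ⟨j, hjF, hjmax⟩ := Set.exists_max_image _ f hFfin ⟨j0, hj0F⟩
  refine ⟨j, hjF.1, le_antisymm ?_ (le_csSup (hfin x) (Set.mem_image_of_mem _ hjF.1))⟩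
  apply csSup_le (Set.Nonempty.image _ ⟨j0, hj0⟩)
  rintro y ⟨i, hi, rfl⟩
  by_cases hiN : i ≤ N
  · exact hjmax i ⟨hi, hiN⟩
  · push_neg at hiN
    have h1 : f i ≤ M - i := hbound i hi
    have h2 : (N : ℝ) < i := by exact_mod_cast hiN
    have : f i < f j0 := by linarith
    have hle : f j0 ≤ f j := hjmax j0 hj0F
    calc f i ≤ f j := by linarith
end

section
/- Let w : [0,∞) → (0,∞) be a weight. If w is approximable from below by monomials, i.e., w(t) ≤ C·P_w(t) for all t ≥ 0 and some constant C > 1, then w is equivalent to a log-tropical weight function; conversely, if w is equivalent to a log-tropical weight then w(t) ≤ C·P_w(t) for some C and all t. -/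
/-- A weight function on `[0,∞)`: positive, non-decreasing, continuous, unbounded. -/
def IsWeight (w : ℝ → ℝ) : Prop :=
  (∀ t : ℝ, 0 ≤ t → 0 < w t) ∧ MonotoneOn w (Set.Ici 0) ∧
    ContinuousOn w (Set.Ici 0) ∧ ∀ M : ℝ, ∃ t : ℝ, 0 ≤ t ∧ M < w t

/-- `v` is log-tropical: `log v(e^x) = sup_{j ∈ E} (b_j + j x)` for some `E ⊆ ℕ`,
`b_j ∈ ℝ`, with the supremum finite for every `x`. -/
def LogTropical (v : ℝ → ℝ) : Prop :=
  ∃ (E : Set ℕ) (b : ℕ → ℝ), E.Nonempty ∧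
    (∀ x : ℝ, BddAbove ((fun j : ℕ => b j + j * x) '' E)) ∧
    ∀ x : ℝ, Real.log (v (Real.exp x)) = sSup ((fun j : ℕ => b j + j * x) '' E)

private lemma log_iSup_nat {f : ℕ → ℝ} (hf : ∀ n, 0 < f n) (hb : BddAbove (Set.range f)) :
    Real.log (⨆ n, f n) = ⨆ n, Real.log (f n) := by
  have hsup_pos : 0 < ⨆ n, f n := lt_of_lt_of_le (hf 0) (le_ciSup hb 0)
  obtain ⟨M, hM⟩ := id hb
  have hblog : BddAbove (Set.range fun n => Real.log (f n)) := by
    refine ⟨Real.log M, ?_⟩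
    rintro y ⟨n, rfl⟩
    exact Real.log_le_log (hf n) (hM ⟨n, rfl⟩)
  apply le_antisymm
  · rw [Real.log_le_iff_le_exp hsup_pos]
    apply ciSup_le
    intro n
    calc f n = Real.exp (Real.log (f n)) := (Real.exp_log (hf n)).symm
      _ ≤ Real.exp (⨆ n, Real.log (f n)) :=
        Real.exp_le_exp.mpr (le_ciSup hblog n)
  · apply ciSup_le
    intro n
    exact Real.log_le_log (hf n) (le_ciSup hb n)

/-- A weight `w` satisfies `w(t) ≤ C·P_w(t)` for some `C > 1` and all
`t ≥ 0` (approximability from below by monomials) if and only if `w` is equivalent to a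
log-tropical weight function. Here `u_k = sup_{t ≥ 0} t^k / w(t)` and
`P_w(t) = sup_k t^k / u_k`. -/
theorem approximable_by_monomials_iff_logTropical (w : ℝ → ℝ) (hw : IsWeight w)
    (u : ℕ → ℝ)
    (hu : ∀ k : ℕ, IsLUB {y : ℝ | ∃ t : ℝ, 0 ≤ t ∧ y = t ^ k / w t} (u k))
    (hupos : ∀ k : ℕ, 0 < u k) :
    (∃ C : ℝ, 1 < C ∧ ∀ t : ℝ, 0 ≤ t → w t ≤ C * ⨆ k : ℕ, t ^ k / u k) ↔
      ∃ v : ℝ → ℝ, IsWeight v ∧ LogTropical v ∧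
        ∃ C₁ C₂ : ℝ, 0 < C₁ ∧ 0 < C₂ ∧
          ∀ t : ℝ, 0 ≤ t → C₁ * v t ≤ w t ∧ w t ≤ C₂ * v t := by
  obtain ⟨hwpos, hwmono, hwcont, hwunb⟩ := hw
  -- Basic facts about P(t) = ⨆ k, t^k / u k
  have hulb : ∀ k : ℕ, ∀ t : ℝ, 0 ≤ t → t ^ k / w t ≤ u k := fun k t ht =>
    (hu k).1 ⟨t, ht, rfl⟩
  have hterm : ∀ t : ℝ, 0 ≤ t → ∀ k : ℕ, t ^ k / u k ≤ w t := by
    intro t ht k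
    rw [div_le_iff₀ (hupos k)]
    have h1 := (div_le_iff₀ (hwpos t ht)).mp (hulb k t ht)
    calc t ^ k ≤ u k * w t := h1
      _ = w t * u k := mul_comm _ _
  have hbddr : ∀ t : ℝ, 0 ≤ t → BddAbove (Set.range fun k : ℕ => t ^ k / u k) := by
    intro t ht
    exact ⟨w t, by rintro y ⟨k, rfl⟩; exact hterm t ht k⟩
  have hPge : ∀ t : ℝ, 0 ≤ t → (u 0)⁻¹ ≤ ⨆ k : ℕ, t ^ k / u k := by
    intro t ht
    have := le_ciSup (hbddr t ht) 0
    simpa [pow_zero, one_div] using this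
  have hPpos : ∀ t : ℝ, 0 ≤ t → 0 < ⨆ k : ℕ, t ^ k / u k := fun t ht =>
    lt_of_lt_of_le (inv_pos.mpr (hupos 0)) (hPge t ht)
  have hPle : ∀ t : ℝ, 0 ≤ t → (⨆ k : ℕ, t ^ k / u k) ≤ w t := fun t ht =>
    ciSup_le (hterm t ht)
  constructor
  · -- forward direction
    rintro ⟨C, hC1, hC⟩
    set P : ℝ → ℝ := fun t => ⨆ k : ℕ, t ^ k / u k with hPdef
    have hPmono : MonotoneOn P (Set.Ici 0) := by
      intro s hs t ht hst
      apply ciSup_le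
      intro k
      calc s ^ k / u k ≤ t ^ k / u k :=
            (div_le_div_iff_of_pos_right (hupos k)).mpr (pow_le_pow_left₀ hs hst k)
        _ ≤ P t := le_ciSup (hbddr t ht) k
    -- continuity on [0, T]
    have hcontIcc : ∀ T : ℝ, 0 < T → ContinuousOn P (Set.Icc 0 T) := by
      intro T hT
      have h2T : (0:ℝ) < 2 * T := by linarith
      have hw2T : 0 < w (2 * T) := hwpos _ h2T.le
      -- tail bound
      have htail : ∀ n k : ℕ, n ≤ k → ∀ t ∈ Set.Icc (0:ℝ) T,
          t ^ k / u k ≤ w (2 * T) * (1 / 2) ^ n := by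
        intro n k hnk t ht
        have hLu : (2 * T) ^ k / w (2 * T) ≤ u k := hulb k _ h2T.le
        have hLpos : 0 < (2 * T) ^ k / w (2 * T) := by positivity
        have h1 : t ^ k / u k ≤ t ^ k / ((2 * T) ^ k / w (2 * T)) :=
          div_le_div_of_nonneg_left (pow_nonneg ht.1 k) hLpos hLu
        have h2 : t ^ k / ((2 * T) ^ k / w (2 * T)) = w (2 * T) * (t / (2 * T)) ^ k := by
          rw [div_pow]
          field_simp
        have h3 : (t / (2 * T)) ^ k ≤ (1 / 2 : ℝ) ^ k := by
          apply pow_le_pow_left₀ (div_nonneg ht.1 h2T.le)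
          rw [div_le_div_iff₀ h2T (by norm_num)]
          linarith [ht.2]
        have h4 : ((1:ℝ) / 2) ^ k ≤ (1 / 2 : ℝ) ^ n :=
          pow_le_pow_of_le_one (by norm_num) (by norm_num) hnk
        calc t ^ k / u k ≤ w (2 * T) * (t / (2 * T)) ^ k := h1.trans_eq h2
          _ ≤ w (2 * T) * (1 / 2) ^ n :=
            mul_le_mul_of_nonneg_left (h3.trans h4) hw2T.le
      -- partial sups
      set F : ℕ → ℝ → ℝ := fun n t =>
        (Finset.range (n + 1)).sup' ⟨0, Finset.mem_range.mpr (Nat.succ_pos n)⟩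
          (fun k => t ^ k / u k) with hFdef
      have hFcont : ∀ n, Continuous (F n) :=
        fun n => Continuous.finset_sup'_apply _ fun i _ => by continuity
      have hFle : ∀ n, ∀ t ∈ Set.Icc (0:ℝ) T, F n t ≤ P t := by
        intro n t ht
        apply Finset.sup'_le
        intro k _
        exact le_ciSup (hbddr t ht.1) k
      have hPleF : ∀ n, ∀ t ∈ Set.Icc (0:ℝ) T, P t ≤ F n t + w (2 * T) * (1 / 2) ^ n := by
        intro n t ht
        apply ciSup_le
        intro k
        rcases le_or_gt k n with hk | hk
        · have h1 : t ^ k / u k ≤ F n t := by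
            simp only [hFdef]
            exact Finset.le_sup' (fun k => t ^ k / u k) (Finset.mem_range.mpr (Nat.lt_succ_of_le hk))
          have h2 : (0:ℝ) ≤ w (2 * T) * (1 / 2) ^ n := by positivity
          linarith
        · have h1 : t ^ k / u k ≤ w (2 * T) * (1 / 2) ^ n := htail n k hk.le t ht
          have h2 : (0:ℝ) < F n t := by
            have h3 : t ^ 0 / u 0 ≤ F n t := by
              simp only [hFdef]
              exact Finset.le_sup' (fun k => t ^ k / u k) (Finset.mem_range.mpr (Nat.succ_pos n))
            have h4 : (0:ℝ) < t ^ 0 / u 0 := by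
              rw [pow_zero]; exact div_pos one_pos (hupos 0)
            linarith
          linarith
      have hunif : TendstoUniformlyOn F P Filter.atTop (Set.Icc 0 T) := by
        rw [Metric.tendstoUniformlyOn_iff]
        intro ε hε
        have htend : Filter.Tendsto (fun n : ℕ => w (2 * T) * (1 / 2) ^ n)
            Filter.atTop (nhds 0) := by
          have := (tendsto_pow_atTop_nhds_zero_of_lt_one
            (by norm_num : (0:ℝ) ≤ 1 / 2) (by norm_num)).const_mul (w (2 * T))
          simpa using this
        filter_upwards [htend.eventually (gt_mem_nhds hε)] with n hn t ht
        rw [Real.dist_eq, abs_of_nonneg (by linarith [hFle n t ht])]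
        have := hPleF n t ht
        linarith [hFle n t ht]
      exact hunif.continuousOn (Filter.Eventually.frequently (Filter.Eventually.of_forall fun n => (hFcont n).continuousOn))
    have hPcont : ContinuousOn P (Set.Ici 0) := by
      intro t₀ ht₀
      have ht₀' : (0:ℝ) ≤ t₀ := ht₀
      have h1 : ContinuousWithinAt P (Set.Icc 0 (t₀ + 1)) t₀ :=
        hcontIcc (t₀ + 1) (by linarith) t₀ ⟨ht₀', by linarith⟩
      apply h1.mono_of_mem_nhdsWithin
      have : Set.Icc (0:ℝ) (t₀ + 1) = Set.Ici 0 ∩ Set.Iic (t₀ + 1) :=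
        (Set.Ici_inter_Iic).symm
      rw [this]
      exact Filter.inter_mem self_mem_nhdsWithin
        (mem_nhdsWithin_of_mem_nhds (Iic_mem_nhds (by linarith)))
    have hPunb : ∀ M : ℝ, ∃ t : ℝ, 0 ≤ t ∧ M < P t := by
      intro M
      obtain ⟨t, ht, hMt⟩ := hwunb (C * max M 1)
      refine ⟨t, ht, ?_⟩
      have h1 : C * max M 1 < C * P t := lt_of_lt_of_le hMt (hC t ht)
      have h2 : max M 1 < P t := lt_of_mul_lt_mul_left h1 (by linarith)
      exact lt_of_le_of_lt (le_max_left M 1) h2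
    -- log-tropical structure
    have hlogterm : ∀ x : ℝ, ∀ k : ℕ,
        Real.log ((Real.exp x) ^ k / u k) = -Real.log (u k) + k * x := by
      intro x k
      rw [Real.log_div (pow_ne_zero k (Real.exp_pos x).ne') (hupos k).ne',
        Real.log_pow, Real.log_exp]
      ring
    have hLT : LogTropical P := by
      refine ⟨Set.univ, fun k => -Real.log (u k), ⟨0, trivial⟩, ?_, ?_⟩
      · intro x
        rw [Set.image_univ]
        refine ⟨Real.log (w (Real.exp x)), ?_⟩
        rintro y ⟨j, rfl⟩
        show -Real.log (u j) + (j:ℝ) * x ≤ Real.log (w (Real.exp x))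
        rw [← hlogterm x j]
        exact Real.log_le_log (div_pos (pow_pos (Real.exp_pos x) j) (hupos j))
          (hterm _ (Real.exp_pos x).le j)
      · intro x
        rw [Set.image_univ]
        have h1 : sSup (Set.range fun j : ℕ => -Real.log (u j) + j * x) =
            ⨆ j : ℕ, (-Real.log (u j) + j * x) := rfl
        rw [h1]
        have h2 : Real.log (P (Real.exp x)) =
            ⨆ k : ℕ, Real.log ((Real.exp x) ^ k / u k) :=
          log_iSup_nat (fun k => div_pos (pow_pos (Real.exp_pos x) k) (hupos k))
            (hbddr _ (Real.exp_pos x).le)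
        rw [h2]
        exact iSup_congr (hlogterm x)
    refine ⟨P, ⟨fun t ht => hPpos t ht, hPmono, hPcont, hPunb⟩, hLT,
      1, C, one_pos, by linarith, fun t ht => ⟨by simpa using hPle t ht, hC t ht⟩⟩
  · -- backward direction
    rintro ⟨v, ⟨hvpos, hvmono, hvcont, hvunb⟩, ⟨E, b, ⟨j₀, hj₀⟩, hbdd, hlog⟩,
      C₁, C₂, hC₁, hC₂, hcomp⟩
    refine ⟨max 2 (C₂ / C₁), lt_of_lt_of_le one_lt_two (le_max_left _ _), ?_⟩
    have hmax1 : (1:ℝ) ≤ max 2 (C₂ / C₁) := le_trans one_le_two (le_max_left _ _)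
    -- monomials below v
    have hvle : ∀ j ∈ E, ∀ t : ℝ, 0 < t → Real.exp (b j) * t ^ j ≤ v t := by
      intro j hj t ht
      have hx := hlog (Real.log t)
      rw [Real.exp_log ht] at hx
      have h1 : b j + j * Real.log t ≤ Real.log (v t) := by
        rw [hx]
        exact le_csSup (hbdd (Real.log t)) ⟨j, hj, rfl⟩
      have hvt : 0 < v t := hvpos t ht.le
      calc Real.exp (b j) * t ^ j = Real.exp (b j + j * Real.log t) := by
            rw [Real.exp_add, Real.exp_nat_mul, Real.exp_log ht]
        _ ≤ Real.exp (Real.log (v t)) := Real.exp_le_exp.mpr h1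
        _ = v t := Real.exp_log hvt
    have hkey : ∀ j ∈ E, ∀ t : ℝ, 0 < t → C₁ * Real.exp (b j) * t ^ j ≤ w t := by
      intro j hj t ht
      calc C₁ * Real.exp (b j) * t ^ j = C₁ * (Real.exp (b j) * t ^ j) := by ring
        _ ≤ C₁ * v t := mul_le_mul_of_nonneg_left (hvle j hj t ht) hC₁.le
        _ ≤ w t := (hcomp t ht.le).1
    -- bound on u j for j ∈ E
    have hub : ∀ j ∈ E, u j ≤ (C₁ * Real.exp (b j))⁻¹ := by
      intro j hj
      have hcpos : (0:ℝ) < C₁ * Real.exp (b j) := by positivity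
      apply (hu j).2
      rintro y ⟨t, ht, rfl⟩
      rcases eq_or_lt_of_le ht with h0 | h0
      · -- t = 0
        rcases Nat.eq_zero_or_pos j with hj0 | hjpos
        · subst hj0
          have hlim : C₁ * Real.exp (b 0) ≤ w 0 := by
            have htw : Filter.Tendsto w (nhdsWithin 0 (Set.Ioi 0)) (nhds (w 0)) :=
              (hwcont 0 Set.self_mem_Ici).mono_left
                (nhdsWithin_mono 0 Set.Ioi_subset_Ici_self)
            refine ge_of_tendsto htw ?_
            filter_upwards [self_mem_nhdsWithin] with s hs
            simpa using hkey 0 hj s hs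
          rw [← h0]
          simp only [pow_zero]
          rw [div_le_iff₀ (hwpos 0 le_rfl)]
          rw [inv_mul_eq_div, le_div_iff₀ hcpos]
          linarith
        · rw [← h0]
          rw [zero_pow hjpos.ne', zero_div]
          positivity
      · -- t > 0
        rw [div_le_iff₀ (hwpos t h0.le), inv_mul_eq_div, le_div_iff₀ hcpos]
        calc t ^ j * (C₁ * Real.exp (b j)) = C₁ * Real.exp (b j) * t ^ j := by ring
          _ ≤ w t := hkey j hj t h0
    have hmono : ∀ j ∈ E, ∀ t : ℝ, 0 ≤ t →
        C₁ * Real.exp (b j) * t ^ j ≤ ⨆ k : ℕ, t ^ k / u k := by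
      intro j hj t ht
      have hcpos : (0:ℝ) < C₁ * Real.exp (b j) := by positivity
      have h1 : C₁ * Real.exp (b j) ≤ (u j)⁻¹ := by
        have := inv_anti₀ (hupos j) (hub j hj)
        rwa [inv_inv] at this
      calc C₁ * Real.exp (b j) * t ^ j = t ^ j * (C₁ * Real.exp (b j)) := by ring
        _ ≤ t ^ j * (u j)⁻¹ := mul_le_mul_of_nonneg_left h1 (pow_nonneg ht j)
        _ = t ^ j / u j := by rw [div_eq_mul_inv]
        _ ≤ ⨆ k : ℕ, t ^ k / u k := le_ciSup (hbddr t ht) j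
    intro t ht
    rcases eq_or_lt_of_le ht with h0 | h0
    · -- t = 0
      have hu0 : u 0 ≤ (w 0)⁻¹ := by
        apply (hu 0).2
        rintro y ⟨s, hs, rfl⟩
        simp only [pow_zero]
        rw [div_le_iff₀ (hwpos s hs), inv_mul_eq_div, le_div_iff₀ (hwpos 0 le_rfl)]
        have := hwmono (Set.mem_Ici.mpr le_rfl) (Set.mem_Ici.mpr hs) hs
        linarith
      have h1 : w 0 ≤ (u 0)⁻¹ := by
        have := inv_anti₀ (hupos 0) hu0
        rwa [inv_inv] at this
      rw [← h0]
      calc w 0 ≤ (u 0)⁻¹ := h1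
        _ ≤ ⨆ k : ℕ, (0:ℝ) ^ k / u k := hPge 0 le_rfl
        _ ≤ max 2 (C₂ / C₁) * ⨆ k : ℕ, (0:ℝ) ^ k / u k := by
          nlinarith [hPpos 0 le_rfl]
    · -- t > 0
      have hx := hlog (Real.log t)
      rw [Real.exp_log h0] at hx
      have hvt : 0 < v t := hvpos t ht
      have hApos : 0 < (⨆ k : ℕ, t ^ k / u k) / C₁ := div_pos (hPpos t ht) hC₁
      have hvP : v t ≤ (⨆ k : ℕ, t ^ k / u k) / C₁ := by
        rw [← Real.exp_log hvt, hx]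
        rw [← Real.le_log_iff_exp_le hApos]
        refine csSup_le ⟨b j₀ + (j₀:ℝ) * Real.log t, ⟨j₀, hj₀, rfl⟩⟩ ?_
        rintro y ⟨j, hj, rfl⟩
        show b j + (j:ℝ) * Real.log t ≤ Real.log ((⨆ k : ℕ, t ^ k / u k) / C₁)
        rw [Real.le_log_iff_exp_le hApos]
        have h1 : Real.exp (b j + j * Real.log t) = Real.exp (b j) * t ^ j := by
          rw [Real.exp_add, Real.exp_nat_mul, Real.exp_log h0]
        rw [h1, le_div_iff₀ hC₁]
        calc Real.exp (b j) * t ^ j * C₁ = C₁ * Real.exp (b j) * t ^ j := by ring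
          _ ≤ ⨆ k : ℕ, t ^ k / u k := hmono j hj t ht
      calc w t ≤ C₂ * v t := (hcomp t ht).2
        _ ≤ C₂ * ((⨆ k : ℕ, t ^ k / u k) / C₁) :=
          mul_le_mul_of_nonneg_left hvP hC₂.le
        _ = (C₂ / C₁) * ⨆ k : ℕ, t ^ k / u k := by ring
        _ ≤ max 2 (C₂ / C₁) * ⨆ k : ℕ, t ^ k / u k :=
          mul_le_mul_of_nonneg_right (le_max_right _ _) (hPpos t ht).le
end

section
/- For any rapid weight function w on [0,∞), the associated weight satisfies P_w(t) ≤ w̃(t) ≤ 6·P_w(t) for all t ≥ 0. -/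
/-- The associated weight of a radial weight `w` on `ℂ`, as a function of `t = |z|`. -/
noncomputable def assocWeight (w : ℝ → ℝ) (t : ℝ) : ℝ :=
  sSup {y : ℝ | ∃ f : ℂ → ℂ, Differentiable ℂ f ∧
    (∀ z : ℂ, ‖f z‖ ≤ w ‖z‖) ∧ y = ‖f (t : ℂ)‖}

open Complex Metric Set intervalIntegral

/-- Maximum modulus principle on an annulus, applied to `f z / z^k`. -/
lemma annulus_div_pow_le {f : ℂ → ℂ} (hf : Differentiable ℂ f) {r₁ r₂ t : ℝ}
    (h₁ : 0 < r₁) (h₁t : r₁ < t) (ht₂ : t < r₂) (k : ℕ) {M₁ M₂ : ℝ}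
    (hb₁ : ∀ z : ℂ, ‖z‖ = r₁ → ‖f z‖ ≤ M₁) (hb₂ : ∀ z : ℂ, ‖z‖ = r₂ → ‖f z‖ ≤ M₂) :
    ‖f (t : ℂ)‖ / t ^ k ≤ max (M₁ / r₁ ^ k) (M₂ / r₂ ^ k) := by
  have ht0 : 0 < t := lt_trans h₁ h₁t
  set U : Set ℂ := {z : ℂ | r₁ < ‖z‖ ∧ ‖z‖ < r₂} with hU
  have hUopen : IsOpen U := by
    have : U = (fun z : ℂ => ‖z‖) ⁻¹' (Set.Ioo r₁ r₂) := rfl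
    rw [this]
    exact isOpen_Ioo.preimage continuous_norm
  have hclos : closure U ⊆ {z : ℂ | r₁ ≤ ‖z‖ ∧ ‖z‖ ≤ r₂} := by
    apply closure_minimal
    · exact fun z hz => ⟨hz.1.le, hz.2.le⟩
    · have : {z : ℂ | r₁ ≤ ‖z‖ ∧ ‖z‖ ≤ r₂} = (fun z : ℂ => ‖z‖) ⁻¹' (Set.Icc r₁ r₂) := rfl
      rw [this]
      exact isClosed_Icc.preimage continuous_norm
  have hzero : ∀ z ∈ closure U, z ≠ 0 := by
    intro z hz h0
    have := (hclos hz).1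
    rw [h0] at this; simp at this; linarith
  set g : ℂ → ℂ := fun z => f z / z ^ k with hg
  have hdc : DiffContOnCl ℂ g U := by
    constructor
    · intro z hz
      have hz0 : (z : ℂ) ≠ 0 := hzero z (subset_closure hz)
      exact ((hf z).div (differentiable_pow k z) (pow_ne_zero k hz0)).differentiableWithinAt
    · apply ContinuousOn.div (hf.continuous.continuousOn)
        ((continuous_pow k).continuousOn)
      intro z hz
      exact pow_ne_zero k (hzero z hz)
  have htnorm : ‖(t:ℂ)‖ = t := by
    simp [abs_of_nonneg ht0.le]
  have hmem : (t : ℂ) ∈ closure U := by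
    apply subset_closure
    exact ⟨by rw [htnorm]; exact h₁t, by rw [htnorm]; exact ht₂⟩
  have hbdd : Bornology.IsBounded U := by
    apply (Metric.isBounded_ball (x := (0:ℂ)) (r := r₂)).subset
    intro z hz
    simpa [mem_ball_zero_iff] using hz.2
  have hfr : ∀ z ∈ frontier U, ‖g z‖ ≤ max (M₁ / r₁ ^ k) (M₂ / r₂ ^ k) := by
    intro z hz
    have hz1 : z ∈ closure U := frontier_subset_closure hz
    have hznU : z ∉ U := by
      intro h
      exact hz.2 (by rwa [hUopen.interior_eq])
    have hcc := hclos hz1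
    have hcase : ‖z‖ = r₁ ∨ ‖z‖ = r₂ := by
      rcases eq_or_lt_of_le hcc.1 with h | h
      · exact Or.inl h.symm
      rcases eq_or_lt_of_le hcc.2 with h' | h'
      · exact Or.inr h'
      · exact absurd ⟨h, h'⟩ hznU
    have hgz : ‖g z‖ = ‖f z‖ / ‖z‖ ^ k := by
      simp [hg, norm_div, norm_pow]
    rcases hcase with h | h
    · refine le_max_of_le_left ?_
      rw [hgz, h]
      exact div_le_div_of_nonneg_right (hb₁ z h) (pow_pos h₁ k).le
    · refine le_max_of_le_right ?_
      rw [hgz, h]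
      exact div_le_div_of_nonneg_right (hb₂ z h) (pow_pos (lt_trans ht0 ht₂) k).le
  have hfin := Complex.norm_le_of_forall_mem_frontier_norm_le hbdd hdc hfr hmem
  calc ‖f (t:ℂ)‖ / t ^ k = ‖g (t:ℂ)‖ := by
        rw [hg]; simp only [norm_div, norm_pow, htnorm]
      _ ≤ _ := hfin

lemma cauchy_coeff_bound {f : ℂ → ℂ} (hf : Differentiable ℂ f) {R M : ℝ} (hR : 0 < R)
    (hb : ∀ z : ℂ, ‖z‖ = R → ‖f z‖ ≤ M) (n : ℕ) :
    ‖cauchyPowerSeries f 0 R n‖ ≤ M / R ^ n := by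
  have hM0 : 0 ≤ M := le_trans (norm_nonneg _) (hb (R : ℂ) (by
    simp [abs_of_nonneg hR.le]))
  have key := norm_cauchyPowerSeries_le f 0 R n
  have hcirc : ∀ θ : ℝ, ‖f (circleMap 0 R θ)‖ ≤ M := by
    intro θ
    exact hb _ (by rw [norm_circleMap_zero, _root_.abs_of_pos hR])
  have hint : (∫ θ : ℝ in (0)..2 * Real.pi, ‖f (circleMap 0 R θ)‖) ≤
      ∫ _ : ℝ in (0)..2 * Real.pi, M := by
    apply intervalIntegral.integral_mono_on Real.two_pi_pos.le
    · exact ((hf.continuous.comp (continuous_circleMap 0 R)).norm).intervalIntegrable _ _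
    · exact intervalIntegrable_const
    · exact fun θ _ => hcirc θ
  rw [intervalIntegral.integral_const, smul_eq_mul, sub_zero] at hint
  calc ‖cauchyPowerSeries f 0 R n‖
      ≤ ((2 * Real.pi)⁻¹ * ∫ θ : ℝ in (0)..2 * Real.pi, ‖f (circleMap 0 R θ)‖) * |R|⁻¹ ^ n :=
        key
    _ ≤ ((2 * Real.pi)⁻¹ * (2 * Real.pi * M)) * |R|⁻¹ ^ n := by
        apply mul_le_mul_of_nonneg_right
        · exact mul_le_mul_of_nonneg_left hint (by positivity)
        · positivity
    _ = M / R ^ n := by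
        rw [_root_.abs_of_pos hR]
        field_simp
        rw [one_div, inv_pow, inv_mul_cancel_right₀ (pow_ne_zero n hR.ne')]

section aux
variable {w : ℝ → ℝ} {u : ℕ → ℝ} {t : ℝ}

set_option maxHeartbeats 1600000 in
/-- Main upper-bound step: any entire `f` dominated by `w` satisfies `|f(t)| ≤ 6 P_w(t)`. -/
lemma upper_aux (hw : ∀ t : ℝ, 0 ≤ t → 0 < w t)
    (hmono : MonotoneOn w (Set.Ici 0)) (hcont : ContinuousOn w (Set.Ici 0))
    (hu : ∀ k : ℕ, IsLUB {y : ℝ | ∃ t : ℝ, 0 ≤ t ∧ y = t ^ k / w t} (u k))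
    (hupos : ∀ k : ℕ, 0 < u k) (ht : 0 ≤ t)
    {f : ℂ → ℂ} (hdiff : Differentiable ℂ f)
    (hbound : ∀ z : ℂ, ‖f z‖ ≤ w ‖z‖) :
    ‖f (t : ℂ)‖ ≤ 6 * ⨆ k : ℕ, t ^ k / u k := by
  have habs : ‖(t : ℂ)‖ = t := by simp [abs_of_nonneg ht]
  have hwt : 0 < w t := hw t ht
  set P := ⨆ k : ℕ, t ^ k / u k with hP
  have hdiv_le : ∀ k, t ^ k / u k ≤ w t := by
    intro k
    have h1 : t ^ k / w t ≤ u k := (hu k).1 ⟨t, ht, rfl⟩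
    rw [div_le_iff₀ (hupos k)]
    rw [div_le_iff₀ hwt] at h1
    nlinarith [hupos k, hwt]
  have hbddP : BddAbove (Set.range fun k : ℕ => t ^ k / u k) := by
    refine ⟨w t, ?_⟩
    rintro y ⟨k, rfl⟩
    exact hdiv_le k
  have hP_le : ∀ k, t ^ k / u k ≤ P := fun k => le_ciSup hbddP k
  have hPpos : 0 < P := lt_of_lt_of_le (by
    rw [pow_zero]; exact one_div_pos.mpr (hupos 0)) (hP_le 0)
  by_contra hcon
  push_neg at hcon
  set A := ‖f (t : ℂ)‖ with hA
  have hA_wt : A ≤ w t := by have := hbound (t : ℂ); rwa [habs] at this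
  have hA0 : 0 < A := lt_trans (by positivity) hcon
  -- case t = 0
  rcases eq_or_lt_of_le ht with rfl | ht0
  · have hu0 : u 0 ≤ 1 / w 0 := by
      apply (hu 0).2
      rintro y ⟨s, hs0, rfl⟩
      rw [pow_zero]
      exact one_div_le_one_div_of_le (hw 0 le_rfl) (hmono self_mem_Ici hs0 hs0)
    have h1 : w 0 ≤ 1 / u 0 := by
      rw [le_one_div (hw 0 le_rfl) (hupos 0)]
      exact hu0
    have h2 : w 0 ≤ P := le_trans h1 (by simpa [pow_zero] using hP_le 0)
    linarith
  -- now t > 0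
  -- witnesses
  have hwit : ∀ k : ℕ, ∃ s : ℝ, 0 < s ∧ w s < A / 6 * (s / t) ^ k := by
    intro k
    have h1 : t ^ k / u k < A / 6 := lt_of_le_of_lt (hP_le k) (by linarith)
    have h2 : 6 * t ^ k / A < u k := by
      rw [div_lt_iff₀ (hupos k)] at h1
      rw [div_lt_iff₀ hA0]
      nlinarith
    have h3 : ∃ y ∈ {y : ℝ | ∃ s : ℝ, 0 ≤ s ∧ y = s ^ k / w s}, 6 * t ^ k / A < y := by
      by_contra hc
      push_neg at hc
      exact absurd ((hu k).2 hc) (not_le.2 h2)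
    obtain ⟨y, ⟨s, hs0, rfl⟩, hy⟩ := h3
    rcases eq_or_lt_of_le hs0 with rfl | hs
    · -- s = 0
      cases k with
      | zero =>
          have hw0 : w 0 < A / 6 := by
            rw [pow_zero] at hy
            have hw00 := hw 0 le_rfl
            rw [div_lt_div_iff₀ hA0 hw00] at hy
            nlinarith
          have hc0 : Filter.Tendsto w (nhdsWithin 0 (Set.Ioi 0)) (nhds (w 0)) :=
            (hcont 0 self_mem_Ici).mono_left (nhdsWithin_mono 0 Ioi_subset_Ici_self)
          have hev : ∀ᶠ x in nhdsWithin 0 (Set.Ioi 0), w x < A / 6 :=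
            hc0.eventually_lt_const hw0
          obtain ⟨x, hx1, hx2⟩ := (eventually_mem_nhdsWithin.and hev).exists
          exact ⟨x, hx1, by simpa using hx2⟩
      | succ k =>
          exfalso
          have : (0:ℝ) ^ (k+1) / w 0 = 0 := by simp
          rw [this] at hy
          have : 0 < 6 * t ^ (k+1) / A := by positivity
          linarith
    · refine ⟨s, hs, ?_⟩
      have hws := hw s hs0
      rw [div_lt_div_iff₀ hA0 hws] at hy
      rw [div_pow]
      rw [div_mul_div_comm, lt_div_iff₀ (by positivity)]
      nlinarith
  choose σ hσpos hσ using hwit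
  -- the set S
  set S : Set ℕ := {k | σ k < t} with hS
  have hA6wt : A / 6 < w t := by linarith
  have hS0 : 0 ∈ S := by
    by_contra hc
    simp only [hS, Set.mem_setOf_eq, not_lt] at hc
    have := hmono ht (le_trans ht hc) hc
    have h0 := hσ 0
    simp only [pow_zero, mul_one] at h0
    linarith
  have hSb : BddAbove S := by
    set T : Set ℝ := {x | x ∈ Set.Icc 0 t ∧ w x ≤ A / 6} with hT
    have hTcl : IsClosed T := by
      have : T = Set.Icc 0 t ∩ w ⁻¹' (Set.Iic (A / 6)) := rfl
      rw [this]
      exact (hcont.mono (Set.Icc_subset_Ici_self)).preimage_isClosed_of_isClosed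
        isClosed_Icc isClosed_Iic
    have hTcp : IsCompact T := isCompact_Icc.of_isClosed_subset hTcl (fun x hx => hx.1)
    have hmemT : ∀ k ∈ S, σ k ∈ T := by
      intro k hk
      have hk' : σ k < t := hk
      have hle1 : (σ k / t) ^ k ≤ 1 := by
        apply pow_le_one₀ (div_nonneg (hσpos k).le ht0.le)
        rw [div_le_one ht0]
        exact hk'.le
      refine ⟨⟨(hσpos k).le, hk'.le⟩, ?_⟩
      have := hσ k
      nlinarith [hA0]
    have hTne : T.Nonempty := ⟨σ 0, hmemT 0 hS0⟩
    set τ := sSup T with hτ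
    have hτT : τ ∈ T := hTcp.sSup_mem hTne
    have hτt : τ < t := by
      rcases eq_or_lt_of_le hτT.1.2 with h | h
      · exfalso; have := hτT.2; rw [h] at this; linarith
      · exact h
    have hτ0 : 0 ≤ τ := hτT.1.1
    have htend : Filter.Tendsto (fun k : ℕ => A / 6 * (τ / t) ^ k) Filter.atTop (nhds 0) := by
      have := tendsto_pow_atTop_nhds_zero_of_lt_one (by positivity : 0 ≤ τ / t)
        ((div_lt_one ht0).2 hτt)
      simpa using this.const_mul (A / 6)
    have hev : ∀ᶠ k : ℕ in Filter.atTop, A / 6 * (τ / t) ^ k < w 0 :=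
      htend.eventually_lt_const (hw 0 le_rfl)
    obtain ⟨N, hN⟩ := Filter.eventually_atTop.1 hev
    refine ⟨N, ?_⟩
    intro k hk
    by_contra hc
    push_neg at hc
    have hNk := hN k hc.le
    have hσkτ : σ k ≤ τ := le_csSup hTcp.bddAbove (hmemT k hk)
    have hmon : (σ k / t) ^ k ≤ (τ / t) ^ k := by
      apply pow_le_pow_left₀ (div_nonneg (hσpos k).le ht0.le)
      exact (div_le_div_iff_of_pos_right ht0).2 hσkτ
    have hwk := hσ k
    have hw0k : w 0 ≤ w (σ k) := hmono self_mem_Ici (hσpos k).le (hσpos k).le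
    nlinarith [hA0]
  -- the maximal element of S
  set k₀ := sSup S with hk₀
  have hk₀S : k₀ ∈ S := Nat.sSup_mem ⟨0, hS0⟩ hSb
  have hk₁ : k₀ + 1 ∉ S := fun h => (Nat.lt_succ_self k₀).not_ge (le_csSup hSb h)
  set s₁ := σ k₀ with hs₁def
  set s₂ := σ (k₀ + 1) with hs₂def
  have hs₁t : s₁ < t := hk₀S
  have hs₁pos : 0 < s₁ := hσpos k₀
  have hw₁ : w s₁ < A / 6 * (s₁ / t) ^ k₀ := hσ k₀
  have hw₂ : w s₂ < A / 6 * (s₂ / t) ^ (k₀ + 1) := hσ (k₀ + 1)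
  have hts₂ : t < s₂ := by
    rcases eq_or_lt_of_le (not_lt.1 hk₁ : t ≤ s₂) with h | h
    · exfalso
      rw [← h] at hw₂
      rw [div_self (ne_of_gt ht0), one_pow, mul_one] at hw₂
      linarith
    · exact h
  have hs₂pos : 0 < s₂ := lt_trans ht0 hts₂
  have hc : ∀ r : ℝ, ∀ z : ℂ, ‖z‖ = r → ‖f z‖ ≤ w r := by
    intro r z hz
    have h1 := hbound z
    rwa [hz] at h1
  have hnormft : ‖f (t : ℂ)‖ = A := rfl
  -- Claim A : 6 * t < s₂
  have claimA : 6 * t < s₂ := by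
    have h := annulus_div_pow_le hdiff hs₁pos hs₁t hts₂ k₀
      (fun z hz => hc s₁ z hz) (fun z hz => hc s₂ z hz)
    have e₁ : w s₁ / s₁ ^ k₀ < A / 6 * s₂ / t ^ (k₀ + 1) := by
      have h1 : w s₁ / s₁ ^ k₀ < A / 6 / t ^ k₀ := by
        rw [div_lt_div_iff₀ (pow_pos hs₁pos _) (pow_pos ht0 _)]
        have hw₁' := hw₁
        rw [div_pow] at hw₁'
        have h2 := mul_lt_mul_of_pos_right hw₁' (pow_pos ht0 k₀)
        have h3 : A / 6 * (s₁ ^ k₀ / t ^ k₀) * t ^ k₀ = A / 6 * s₁ ^ k₀ := by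
          field_simp
        rw [h3] at h2
        linarith [h2]
      have h2 : A / 6 / t ^ k₀ < A / 6 * s₂ / t ^ (k₀ + 1) := by
        rw [pow_succ, div_lt_div_iff₀ (pow_pos ht0 _) (by positivity)]
        nlinarith [mul_lt_mul_of_pos_left hts₂ (show (0:ℝ) < A / 6 * t ^ k₀ by positivity)]
      linarith
    have e₂ : w s₂ / s₂ ^ k₀ < A / 6 * s₂ / t ^ (k₀ + 1) := by
      rw [div_lt_div_iff₀ (pow_pos hs₂pos _) (by positivity)]
      have hw₂' := hw₂
      rw [div_pow] at hw₂'
      have h2 := mul_lt_mul_of_pos_right hw₂' (pow_pos ht0 (k₀ + 1))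
      have h3 : A / 6 * (s₂ ^ (k₀ + 1) / t ^ (k₀ + 1)) * t ^ (k₀ + 1)
          = A / 6 * s₂ * s₂ ^ k₀ := by
        field_simp
        ring
      rw [h3] at h2
      linarith [h2]
    have h3 : A / t ^ k₀ < A / 6 * s₂ / t ^ (k₀ + 1) := by
      rw [← hnormft]
      exact lt_of_le_of_lt h (max_lt e₁ e₂)
    rw [pow_succ, div_lt_div_iff₀ (pow_pos ht0 _) (by positivity)] at h3
    have h3' : A * t * t ^ k₀ < A / 6 * s₂ * t ^ k₀ := by ring_nf; ring_nf at h3; linarith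
    have h4 : A * t < A / 6 * s₂ := lt_of_mul_lt_mul_right h3' (pow_pos ht0 k₀).le
    nlinarith [hA0]
  -- Claim B : 6 * s₁ < t
  have claimB : 6 * s₁ < t := by
    have h := annulus_div_pow_le hdiff hs₁pos hs₁t hts₂ (k₀ + 1)
      (fun z hz => hc s₁ z hz) (fun z hz => hc s₂ z hz)
    have e₁ : w s₁ / s₁ ^ (k₀ + 1) < A / 6 / (t ^ k₀ * s₁) := by
      rw [div_lt_div_iff₀ (pow_pos hs₁pos _) (by positivity)]
      have hw₁' := hw₁
      rw [div_pow] at hw₁'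
      have h2 := mul_lt_mul_of_pos_right hw₁'
        (mul_pos (pow_pos ht0 k₀) (pow_pos hs₁pos (k₀ + 1)))
      have h3 : A / 6 * (s₁ ^ k₀ / t ^ k₀) * (t ^ k₀ * s₁ ^ (k₀ + 1))
          = A / 6 * s₁ ^ (k₀ + 1) * s₁ ^ k₀ := by
        field_simp
      rw [h3] at h2
      have h5 : w s₁ * (t ^ k₀ * s₁) * s₁ ^ k₀ < A / 6 * s₁ ^ (k₀ + 1) * s₁ ^ k₀ := by
        ring_nf
        ring_nf at h2
        linarith
      exact lt_of_mul_lt_mul_right h5 (pow_pos hs₁pos k₀).le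
    have e₂ : w s₂ / s₂ ^ (k₀ + 1) < A / 6 / (t ^ k₀ * s₁) := by
      have h1 : w s₂ / s₂ ^ (k₀ + 1) < A / 6 / t ^ (k₀ + 1) := by
        rw [div_lt_div_iff₀ (pow_pos hs₂pos _) (pow_pos ht0 _)]
        have hw₂' := hw₂
        rw [div_pow] at hw₂'
        have h2 := mul_lt_mul_of_pos_right hw₂' (pow_pos ht0 (k₀ + 1))
        have h3 : A / 6 * (s₂ ^ (k₀ + 1) / t ^ (k₀ + 1)) * t ^ (k₀ + 1)
            = A / 6 * s₂ ^ (k₀ + 1) := by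
          field_simp
        rw [h3] at h2
        linarith
      have h2 : A / 6 / t ^ (k₀ + 1) < A / 6 / (t ^ k₀ * s₁) := by
        apply div_lt_div_of_pos_left (by positivity) (by positivity)
        rw [pow_succ]
        exact mul_lt_mul_of_pos_left hs₁t (pow_pos ht0 k₀)
      linarith
    have h3 : A / t ^ (k₀ + 1) < A / 6 / (t ^ k₀ * s₁) := by
      rw [← hnormft]
      exact lt_of_le_of_lt h (max_lt e₁ e₂)
    rw [pow_succ, div_lt_div_iff₀ (by positivity) (by positivity)] at h3
    have h4 : A * s₁ < A / 6 * t := by nlinarith [pow_pos ht0 k₀]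
    nlinarith [hA0]
  -- Power series representation and Cauchy estimates
  have hp2 : HasFPowerSeriesOnBall f (cauchyPowerSeries f 0 s₂) 0 ⊤ := by
    have h := hdiff.hasFPowerSeriesOnBall (0 : ℂ) (R := ⟨s₂, hs₂pos.le⟩)
      (by exact_mod_cast hs₂pos)
    exact h
  have hp1 : HasFPowerSeriesOnBall f (cauchyPowerSeries f 0 s₁) 0 ⊤ := by
    have h := hdiff.hasFPowerSeriesOnBall (0 : ℂ) (R := ⟨s₁, hs₁pos.le⟩)
      (by exact_mod_cast hs₁pos)
    exact h
  have heq : cauchyPowerSeries f 0 s₁ = cauchyPowerSeries f 0 s₂ :=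
    hp1.hasFPowerSeriesAt.eq_formalMultilinearSeries hp2.hasFPowerSeriesAt
  set p := cauchyPowerSeries f 0 s₂ with hpdef
  have hcb₂ : ∀ n, ‖p n‖ ≤ w s₂ / s₂ ^ n :=
    fun n => cauchy_coeff_bound hdiff hs₂pos (fun z hz => hc s₂ z hz) n
  have hcb₁ : ∀ n, ‖p n‖ ≤ w s₁ / s₁ ^ n := by
    intro n
    have h := cauchy_coeff_bound hdiff hs₁pos (fun z hz => hc s₁ z hz) n
    rw [heq] at h
    exact h
  set g : ℕ → ℝ := fun n => ‖p n fun _ => (t : ℂ)‖ with hgdef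
  have htnorm : ‖(t : ℂ)‖ = t := habs
  have hterm : ∀ n, g n ≤ ‖p n‖ * t ^ n := by
    intro n
    calc g n ≤ ‖p n‖ * ∏ _i : Fin n, ‖(t : ℂ)‖ := (p n).le_opNorm _
      _ = ‖p n‖ * t ^ n := by rw [htnorm]; simp
  have hg1 : ∀ n, g n ≤ w s₁ * (t / s₁) ^ n := by
    intro n
    calc g n ≤ ‖p n‖ * t ^ n := hterm n
      _ ≤ w s₁ / s₁ ^ n * t ^ n :=
          mul_le_mul_of_nonneg_right (hcb₁ n) (pow_nonneg ht0.le n)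
      _ = w s₁ * (t / s₁) ^ n := by rw [div_pow]; ring
  have hg2 : ∀ n, g n ≤ w s₂ * (t / s₂) ^ n := by
    intro n
    calc g n ≤ ‖p n‖ * t ^ n := hterm n
      _ ≤ w s₂ / s₂ ^ n * t ^ n :=
          mul_le_mul_of_nonneg_right (hcb₂ n) (pow_nonneg ht0.le n)
      _ = w s₂ * (t / s₂) ^ n := by rw [div_pow]; ring
  have hr₂lt : t / s₂ < 1 := (div_lt_one hs₂pos).2 hts₂
  have hr₂nn : 0 ≤ t / s₂ := by positivity
  have hgeo₂ : Summable (fun n => w s₂ * (t / s₂) ^ n) :=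
    (summable_geometric_of_lt_one hr₂nn hr₂lt).mul_left _
  have hgsum : Summable g := Summable.of_nonneg_of_le (fun n => norm_nonneg _) hg2 hgeo₂
  have hfeq : HasSum (fun n => p n fun _ => (t : ℂ)) (f (t : ℂ)) := by
    have h := hp2.hasSum (y := (t : ℂ)) (by simp)
    simpa using h
  have hA_le : A ≤ ∑' n, g n := by
    rw [← hnormft, ← hfeq.tsum_eq]
    exact norm_tsum_le_tsum_norm hgsum
  -- head estimate
  have hs₁t6 : s₁ / t < 1 / 6 := by rw [div_lt_div_iff₀ ht0 (by norm_num)]; linarith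
  have hs₁tnn : 0 ≤ s₁ / t := by positivity
  have hC : w s₁ * (t / s₁) ^ k₀ < A / 6 := by
    have h2 := mul_lt_mul_of_pos_right hw₁ (pow_pos (div_pos ht0 hs₁pos) k₀)
    have h3 : A / 6 * (s₁ / t) ^ k₀ * (t / s₁) ^ k₀ = A / 6 := by
      rw [mul_assoc, ← mul_pow]
      field_simp
      rw [one_pow]
    rw [h3] at h2
    exact h2
  have hhead : ∑ j ∈ Finset.range (k₀ + 1), g j ≤ A / 6 * (6 / 5) := by
    have step1 : ∑ j ∈ Finset.range (k₀ + 1), g j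
        ≤ ∑ j ∈ Finset.range (k₀ + 1), w s₁ * (t / s₁) ^ j :=
      Finset.sum_le_sum fun j _ => hg1 j
    have step2 : ∀ j ∈ Finset.range (k₀ + 1),
        w s₁ * (t / s₁) ^ j = (w s₁ * (t / s₁) ^ k₀) * (s₁ / t) ^ (k₀ - j) := by
      intro j hj
      have hj' : j ≤ k₀ := Nat.lt_succ_iff.1 (Finset.mem_range.1 hj)
      have h1 : (t / s₁) ^ k₀ = (t / s₁) ^ j * (t / s₁) ^ (k₀ - j) := by
        rw [← pow_add, Nat.add_sub_cancel' hj']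
      rw [h1]
      have h2 : (t / s₁) ^ (k₀ - j) * (s₁ / t) ^ (k₀ - j) = 1 := by
        rw [← mul_pow]
        field_simp
        rw [one_pow]
      calc w s₁ * (t / s₁) ^ j
          = w s₁ * ((t / s₁) ^ j * ((t / s₁) ^ (k₀ - j) * (s₁ / t) ^ (k₀ - j))) := by
            rw [h2, mul_one]
        _ = w s₁ * ((t / s₁) ^ j * (t / s₁) ^ (k₀ - j)) * (s₁ / t) ^ (k₀ - j) := by ring
    have step3 : ∑ j ∈ Finset.range (k₀ + 1), w s₁ * (t / s₁) ^ j
        = (w s₁ * (t / s₁) ^ k₀) * ∑ j ∈ Finset.range (k₀ + 1), (s₁ / t) ^ j := by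
      rw [Finset.sum_congr rfl step2, ← Finset.mul_sum]
      congr 1
      rw [← Finset.sum_range_reflect (fun j => (s₁ / t) ^ j) (k₀ + 1)]
      apply Finset.sum_congr rfl
      intro j hj
      have hje : k₀ + 1 - 1 - j = k₀ - j := by omega
      rw [hje]
    have step4 : ∑ j ∈ Finset.range (k₀ + 1), (s₁ / t) ^ j ≤ (1 - s₁ / t)⁻¹ := by
      have hsummable : Summable (fun j : ℕ => (s₁ / t) ^ j) :=
        summable_geometric_of_lt_one hs₁tnn (by linarith)
      have h1 := Summable.sum_le_tsum (Finset.range (k₀ + 1))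
        (fun j _ => pow_nonneg hs₁tnn j) hsummable
      rwa [tsum_geometric_of_lt_one hs₁tnn (by linarith)] at h1
    have step5 : (1 - s₁ / t)⁻¹ ≤ 6 / 5 := by
      have h1 : (5 : ℝ) / 6 ≤ 1 - s₁ / t := by linarith
      have h2 := inv_anti₀ (by norm_num : (0:ℝ) < 5 / 6) h1
      rw [show ((5:ℝ)/6)⁻¹ = 6/5 by norm_num] at h2
      exact h2
    have hCnn : 0 ≤ w s₁ * (t / s₁) ^ k₀ :=
      mul_nonneg (hw s₁ hs₁pos.le).le (pow_nonneg (div_nonneg ht0.le hs₁pos.le) _)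
    calc ∑ j ∈ Finset.range (k₀ + 1), g j
        ≤ (w s₁ * (t / s₁) ^ k₀) * ∑ j ∈ Finset.range (k₀ + 1), (s₁ / t) ^ j := by
          rw [← step3]; exact step1
      _ ≤ (w s₁ * (t / s₁) ^ k₀) * (1 - s₁ / t)⁻¹ :=
          mul_le_mul_of_nonneg_left step4 hCnn
      _ ≤ A / 6 * (6 / 5) := by
          apply mul_le_mul hC.le step5 (inv_nonneg.2 (by linarith)) (by positivity)
  -- tail estimate
  have hts₂6 : t / s₂ < 1 / 6 := by rw [div_lt_div_iff₀ hs₂pos (by norm_num)]; linarith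
  have hD : w s₂ * (t / s₂) ^ (k₀ + 1) < A / 6 := by
    have h2 := mul_lt_mul_of_pos_right hw₂ (pow_pos (div_pos ht0 hs₂pos) (k₀ + 1))
    have h3 : A / 6 * (s₂ / t) ^ (k₀ + 1) * (t / s₂) ^ (k₀ + 1) = A / 6 := by
      rw [mul_assoc, ← mul_pow]
      field_simp
      rw [one_pow]
    rw [h3] at h2
    exact h2
  have htail : ∑' i, g (i + (k₀ + 1)) ≤ A / 6 * (6 / 5) := by
    have hle : ∀ i, g (i + (k₀ + 1)) ≤ (w s₂ * (t / s₂) ^ (k₀ + 1)) * (t / s₂) ^ i := by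
      intro i
      have h1 := hg2 (i + (k₀ + 1))
      rw [pow_add] at h1
      calc g (i + (k₀ + 1)) ≤ w s₂ * ((t / s₂) ^ i * (t / s₂) ^ (k₀ + 1)) := h1
        _ = (w s₂ * (t / s₂) ^ (k₀ + 1)) * (t / s₂) ^ i := by ring
    have hsum2 : Summable (fun i => (w s₂ * (t / s₂) ^ (k₀ + 1)) * (t / s₂) ^ i) :=
      (summable_geometric_of_lt_one hr₂nn hr₂lt).mul_left _
    have hsumg : Summable (fun i => g (i + (k₀ + 1))) :=
      (summable_nat_add_iff (k₀ + 1)).2 hgsum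
    have h1 := Summable.tsum_le_tsum hle hsumg hsum2
    have h2 : ∑' i, (w s₂ * (t / s₂) ^ (k₀ + 1)) * (t / s₂) ^ i
        = (w s₂ * (t / s₂) ^ (k₀ + 1)) * (1 - t / s₂)⁻¹ := by
      rw [tsum_mul_left, tsum_geometric_of_lt_one hr₂nn hr₂lt]
    rw [h2] at h1
    have step5 : (1 - t / s₂)⁻¹ ≤ 6 / 5 := by
      have ha : (5 : ℝ) / 6 ≤ 1 - t / s₂ := by linarith
      have hb := inv_anti₀ (by norm_num : (0:ℝ) < 5 / 6) ha
      rw [show ((5:ℝ)/6)⁻¹ = 6/5 by norm_num] at hb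
      exact hb
    calc ∑' i, g (i + (k₀ + 1))
        ≤ (w s₂ * (t / s₂) ^ (k₀ + 1)) * (1 - t / s₂)⁻¹ := h1
      _ ≤ A / 6 * (6 / 5) := by
          apply mul_le_mul hD.le step5 (inv_nonneg.2 (by linarith)) (by positivity)
  -- conclude
  rw [← Summable.sum_add_tsum_nat_add (f := g) (k₀ + 1) hgsum] at hA_le
  have : A ≤ A / 6 * (6 / 5) + A / 6 * (6 / 5) := le_trans hA_le (by linarith)
  linarith

end aux

/-- For any rapid weight function `w` on `[0,∞)`, the associated weight
satisfies `P_w(t) ≤ w̃(t) ≤ 6·P_w(t)` for all `t ≥ 0`, where `u_k = sup_{t≥0} t^k/w(t)`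
and `P_w(t) = sup_k t^k/u_k`. -/
theorem assocWeight_comparable_monomial_envelope (w : ℝ → ℝ)
    (hw : ∀ t : ℝ, 0 ≤ t → 0 < w t)
    (hmono : MonotoneOn w (Set.Ici 0)) (hcont : ContinuousOn w (Set.Ici 0))
    (hunb : ∀ M : ℝ, ∃ t : ℝ, 0 ≤ t ∧ M < w t)
    (hrapid : ∀ k : ℕ, Filter.Tendsto (fun t : ℝ => w t / t ^ k)
      Filter.atTop Filter.atTop)
    (u : ℕ → ℝ)
    (hu : ∀ k : ℕ, IsLUB {y : ℝ | ∃ t : ℝ, 0 ≤ t ∧ y = t ^ k / w t} (u k))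
    (hupos : ∀ k : ℕ, 0 < u k) :
    ∀ t : ℝ, 0 ≤ t →
      (⨆ k : ℕ, t ^ k / u k) ≤ assocWeight w t ∧
      assocWeight w t ≤ 6 * ⨆ k : ℕ, t ^ k / u k := by
  intro t ht
  have habs : ‖(t : ℂ)‖ = t := by simp [abs_of_nonneg ht]
  have hSb : BddAbove {y : ℝ | ∃ f : ℂ → ℂ, Differentiable ℂ f ∧
      (∀ z : ℂ, ‖f z‖ ≤ w ‖z‖) ∧ y = ‖f (t : ℂ)‖} := by
    refine ⟨w t, ?_⟩
    rintro y ⟨f, hd, hb, rfl⟩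
    have := hb (t : ℂ)
    rwa [habs] at this
  have habs_uk : ∀ k : ℕ, ‖((u k : ℝ) : ℂ)‖ = u k := by
    intro k
    rw [Complex.norm_real, Real.norm_eq_abs]
    exact abs_of_pos (hupos k)
  constructor
  · apply ciSup_le
    intro k
    apply le_csSup hSb
    refine ⟨fun z => z ^ k / ((u k : ℝ) : ℂ), (differentiable_pow k).div_const _, ?_, ?_⟩
    · intro z
      have hz0 : 0 ≤ ‖z‖ := norm_nonneg z
      have h1 : ‖z‖ ^ k / w ‖z‖ ≤ u k := (hu k).1 ⟨_, hz0, rfl⟩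
      have hwz := hw _ hz0
      have h2 : ‖z ^ k / ((u k : ℝ) : ℂ)‖ = ‖z‖ ^ k / u k := by
        rw [norm_div, norm_pow, habs_uk]
      rw [h2, div_le_iff₀ (hupos k)]
      rw [div_le_iff₀ hwz] at h1
      nlinarith [hwz, hupos k]
    · rw [norm_div, norm_pow, habs_uk, habs]
  · apply Real.sSup_le
    · rintro y ⟨f, hd, hb, rfl⟩
      exact upper_aux hw hmono hcont hu hupos ht hd hb
    · have hdiv_le : ∀ k, t ^ k / u k ≤ w t := by
        intro k
        have h1 : t ^ k / w t ≤ u k := (hu k).1 ⟨t, ht, rfl⟩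
        rw [div_le_iff₀ (hupos k)]
        rw [div_le_iff₀ (hw t ht)] at h1
        nlinarith [hupos k, hw t ht]
      have hbddP : BddAbove (Set.range fun k : ℕ => t ^ k / u k) := by
        refine ⟨w t, ?_⟩
        rintro y ⟨k, rfl⟩
        exact hdiv_le k
      have h0 : (0:ℝ) < t ^ 0 / u 0 := by
        rw [pow_zero]
        exact one_div_pos.mpr (hupos 0)
      have := le_trans h0.le (le_ciSup hbddP 0)
      positivity
end

section
/- Let w : [0,∞) → (0,∞) be a rapid weight function that is log-convex and C²-smooth, with Φ(x) = log w(e^x). If liminf_{x→+∞} Φ''(x) > 0, then w is equivalent to a log-tropical weight function. -/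
open Filter Topology Set

/-- Let `w` be a rapid weight, log-convex and C²-smooth in the sense that
`Φ(x) = log w(e^x)` is convex and C² on `ℝ`. If `liminf_{x→+∞} Φ''(x) > 0` (i.e. `Φ''`
is eventually bounded below by some `α > 0`), then `w` is equivalent to a log-tropical
weight function. -/
theorem liminf_pos_implies_logTropical (w : ℝ → ℝ) (hw : IsWeight w)
    (hrapid : ∀ k : ℕ, Filter.Tendsto (fun t : ℝ => w t / t ^ k)
      Filter.atTop Filter.atTop)
    (hconv : ConvexOn ℝ Set.univ (fun x : ℝ => Real.log (w (Real.exp x))))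
    (hC2 : ContDiff ℝ 2 (fun x : ℝ => Real.log (w (Real.exp x))))
    (hliminf : ∃ α : ℝ, 0 < α ∧ ∃ A : ℝ, ∀ x : ℝ, A ≤ x →
      α ≤ iteratedDeriv 2 (fun x : ℝ => Real.log (w (Real.exp x))) x) :
    ∃ v : ℝ → ℝ, IsWeight v ∧ LogTropical v ∧
      ∃ C₁ C₂ : ℝ, 0 < C₁ ∧ 0 < C₂ ∧
        ∀ t : ℝ, 0 ≤ t → C₁ * v t ≤ w t ∧ w t ≤ C₂ * v t := by
  obtain ⟨hpos, hmono, hcont, hunb⟩ := hw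
  obtain ⟨α, hα, A, hA⟩ := hliminf
  set Φ : ℝ → ℝ := fun x : ℝ => Real.log (w (Real.exp x)) with hΦdef
  have hwpos : ∀ x : ℝ, 0 < w (Real.exp x) := fun x => hpos _ (Real.exp_pos x).le
  have hexpΦ : ∀ x : ℝ, Real.exp (Φ x) = w (Real.exp x) := fun x => Real.exp_log (hwpos x)
  have hΦmono : Monotone Φ := by
    intro x y hxy
    exact Real.log_le_log (hwpos x)
      (hmono (Real.exp_pos x).le (Real.exp_pos y).le (Real.exp_le_exp.2 hxy))
  have hΦdiff : Differentiable ℝ Φ := hC2.differentiable (by norm_num)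
  set φ : ℝ → ℝ := deriv Φ with hφdef
  have hφC1 : ContDiff ℝ 1 φ := by
    have h2 : ContDiff ℝ ((1 : ℕ) + 1) Φ := by exact_mod_cast hC2
    exact (contDiff_succ_iff_deriv.mp h2).2.2
  have hφdiff : Differentiable ℝ φ := hφC1.differentiable (by norm_num)
  have hφmono : Monotone φ := by
    have h := hconv.monotoneOn_deriv (fun x _ => hΦdiff x)
    exact monotoneOn_univ.1 h
  have hgrad : ∀ y x : ℝ, y ≤ x → Φ x - Φ y ≤ φ x * (x - y) := by
    intro y x hyx
    rcases eq_or_lt_of_le hyx with rfl | h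
    · simp
    · have hs := hconv.slope_le_deriv (Set.mem_univ y) (Set.mem_univ x) h (hΦdiff x)
      rw [slope_def_field, div_le_iff₀ (by linarith : (0:ℝ) < x - y)] at hs
      linarith
  have hφ0 : ∀ x : ℝ, 0 ≤ φ x := by
    intro x
    have hs := hconv.slope_le_deriv (Set.mem_univ (x - 1)) (Set.mem_univ x)
      (by linarith) (hΦdiff x)
    have hsv : slope Φ (x - 1) x = Φ x - Φ (x - 1) := by
      rw [slope_def_field]; ring
    have hm := hΦmono (show x - 1 ≤ x by linarith)
    rw [hsv] at hs
    linarith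
  have hiter : ∀ x : ℝ, A ≤ x → α ≤ deriv φ x := by
    intro x hx
    have h := hA x hx
    rwa [show (2 : ℕ) = 1 + 1 from rfl, iteratedDeriv_succ, iteratedDeriv_one] at h
  have hgrow : ∀ y x : ℝ, A ≤ y → y ≤ x → φ y + α * (x - y) ≤ φ x := by
    have hghas : ∀ s : ℝ, HasDerivAt (fun s => φ s - α * s) (deriv φ s - α) s := by
      intro s
      have h := ((hφdiff s).hasDerivAt.sub ((hasDerivAt_id s).const_mul α))
      simpa only [mul_one, id_eq, Pi.sub_def] using h
    have hmg : MonotoneOn (fun s => φ s - α * s) (Set.Ici A) := by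
      apply monotoneOn_of_deriv_nonneg (convex_Ici A)
      · exact (Differentiable.continuous (fun s => (hghas s).differentiableAt)).continuousOn
      · exact fun s _ => (hghas s).differentiableAt.differentiableWithinAt
      · intro s hs
        rw [interior_Ici] at hs
        rw [(hghas s).deriv]
        have := hiter s hs.le
        linarith
    intro y x hy hyx
    have h := hmg hy (Set.mem_Ici.2 (le_trans hy hyx)) hyx
    have hr : α * (x - y) = α * x - α * y := by ring
    simp only at h
    linarith
  set ψ : ℕ → ℝ → ℝ := fun j y => Φ y - (j : ℝ) * y with hψdef
  have hψhas : ∀ (j : ℕ) (y : ℝ), HasDerivAt (ψ j) (φ y - j) y := by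
    intro j y
    have h := ((hΦdiff y).hasDerivAt.sub ((hasDerivAt_id y).const_mul (j : ℝ)))
    simp only [hψdef]
    simpa only [mul_one, id_eq, Pi.sub_def] using h
  have hψdiff : ∀ j : ℕ, Differentiable ℝ (ψ j) := fun j y => (hψhas j y).differentiableAt
  have hψderiv : ∀ (j : ℕ) (y : ℝ), deriv (ψ j) y = φ y - j := fun j y => (hψhas j y).deriv
  have hψmonOn : ∀ (j : ℕ) (c : ℝ), (j : ℝ) ≤ φ c → MonotoneOn (ψ j) (Set.Ici c) := by
    intro j c hc
    apply monotoneOn_of_deriv_nonneg (convex_Ici c)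
    · exact (hψdiff j).continuous.continuousOn
    · exact (hψdiff j).differentiableOn
    · intro s hs
      rw [interior_Ici] at hs
      rw [hψderiv]
      have := hφmono hs.le
      linarith
  have hL : ∀ x : ℝ, Real.log (w 0) ≤ Φ x := by
    intro x
    exact Real.log_le_log (hpos 0 le_rfl) (hmono (Set.mem_Ici.2 le_rfl) (Real.exp_pos x).le (Real.exp_pos x).le)
  have hbdd : ∀ j : ℕ, BddBelow (Set.range (ψ j)) := by
    intro j
    set c : ℝ := A + ((j : ℝ) + 1 + |φ A|) / α with hc
    have hnum : 0 ≤ ((j : ℝ) + 1 + |φ A|) := by positivity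
    have hcA : A ≤ c := by
      rw [hc]
      have : 0 ≤ ((j : ℝ) + 1 + |φ A|) / α := by positivity
      linarith
    have hφc : (j : ℝ) ≤ φ c := by
      have hg := hgrow A c le_rfl hcA
      have he : α * (c - A) = (j : ℝ) + 1 + |φ A| := by
        rw [hc, add_sub_cancel_left]
        exact mul_div_cancel₀ _ hα.ne'
      have habs := neg_abs_le (φ A)
      linarith
    refine ⟨min (ψ j c) (Real.log (w 0) - (j : ℝ) * c), ?_⟩
    rintro r ⟨y, rfl⟩
    rcases le_total y c with hy | hy
    · have h1 : (j : ℝ) * y ≤ (j : ℝ) * c := by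
        apply mul_le_mul_of_nonneg_left hy (Nat.cast_nonneg j)
      have h2 : Real.log (w 0) - (j : ℝ) * c ≤ ψ j y := by
        have := hL y
        simp only [hψdef]
        linarith
      exact le_trans (min_le_right _ _) h2
    · exact le_trans (min_le_left _ _) (hψmonOn j c hφc (Set.mem_Ici.2 le_rfl)
        (Set.mem_Ici.2 hy) hy)
  set b : ℕ → ℝ := fun j => sInf (Set.range (ψ j)) with hbdef
  have hbleψ : ∀ (j : ℕ) (x : ℝ), b j ≤ ψ j x := fun j x => csInf_le (hbdd j) ⟨x, rfl⟩
  have hble : ∀ (j : ℕ) (x : ℝ), b j + (j : ℝ) * x ≤ Φ x := by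
    intro j x
    have h := hbleψ j x
    simp only [hψdef] at h
    linarith
  have hFbdd : ∀ x : ℝ, BddAbove ((fun j : ℕ => b j + (j : ℝ) * x) '' Set.univ) := by
    intro x
    refine ⟨Φ x, ?_⟩
    rintro r ⟨j, -, rfl⟩
    exact hble j x
  have hFne : ∀ x : ℝ, ((fun j : ℕ => b j + (j : ℝ) * x) '' Set.univ).Nonempty :=
    fun x => ⟨b 0 + (0 : ℕ) * x, ⟨0, Set.mem_univ 0, rfl⟩⟩
  set T : ℝ → ℝ := fun x => sSup ((fun j : ℕ => b j + (j : ℝ) * x) '' Set.univ) with hTdef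
  have hjleT : ∀ (j : ℕ) (x : ℝ), b j + (j : ℝ) * x ≤ T x :=
    fun j x => le_csSup (hFbdd x) ⟨j, Set.mem_univ j, rfl⟩
  have hb0leT : ∀ x : ℝ, b 0 ≤ T x := by
    intro x
    have := hjleT 0 x
    simpa using this
  have hTleΦ : ∀ x : ℝ, T x ≤ Φ x := by
    intro x
    apply csSup_le (hFne x)
    rintro r ⟨j, -, rfl⟩
    exact hble j x
  have hTmono : Monotone T := by
    intro x y hxy
    apply csSup_le (hFne x)
    rintro r ⟨j, -, rfl⟩
    have h1 : (j : ℝ) * x ≤ (j : ℝ) * y := mul_le_mul_of_nonneg_left hxy (Nat.cast_nonneg j)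
    calc b j + (j : ℝ) * x ≤ b j + (j : ℝ) * y := by linarith
      _ ≤ T y := hjleT j y
  have hTconv : ConvexOn ℝ Set.univ T := by
    refine ⟨convex_univ, ?_⟩
    intro x _ y _ a c ha hc hac
    simp only [smul_eq_mul]
    apply csSup_le (hFne _)
    rintro r ⟨j, -, rfl⟩
    have h1 : b j + (j : ℝ) * (a * x + c * y)
        = a * (b j + (j : ℝ) * x) + c * (b j + (j : ℝ) * y) := by
      linear_combination (b j) * hac.symm
    refine le_trans (le_of_eq h1) ?_
    exact add_le_add (mul_le_mul_of_nonneg_left (hjleT j x) ha)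
      (mul_le_mul_of_nonneg_left (hjleT j y) hc)
  have hTcont : Continuous T := by
    have h := hTconv.continuousOn isOpen_univ
    rw [continuousOn_univ] at h
    exact h
  -- key estimate
  have hkey : ∀ x : ℝ, A + 1 / α ≤ x → Φ x ≤ 1 / α + T x := by
    intro x hx
    set j : ℕ := ⌊φ x⌋₊ with hj
    have hj1 : (j : ℝ) ≤ φ x := Nat.floor_le (hφ0 x)
    have hj2 : φ x < (j : ℝ) + 1 := Nat.lt_floor_add_one _
    have hαinv : 0 < 1 / α := by positivity
    set z : ℝ := x - 1 / α with hz
    have hzA : A ≤ z := by rw [hz]; linarith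
    have hzx : z ≤ x := by rw [hz]; linarith
    have hφz : φ z ≤ (j : ℝ) := by
      have hg := hgrow z x hzA hzx
      have he : α * (x - z) = 1 := by
        rw [hz]
        field_simp
        ring
      linarith
    have hmid : ∀ y : ℝ, z ≤ y → y ≤ x → ψ j x - ψ j y ≤ 1 / α := by
      intro y hzy hyx
      have hg := hgrad y x hyx
      have h1 : ψ j x - ψ j y = (Φ x - Φ y) - (j : ℝ) * (x - y) := by
        simp only [hψdef]; ring
      have h2 : (Φ x - Φ y) - (j : ℝ) * (x - y) ≤ (φ x - (j : ℝ)) * (x - y) := by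
        have : (φ x - (j : ℝ)) * (x - y) = φ x * (x - y) - (j : ℝ) * (x - y) := by ring
        linarith
      have h3 : (φ x - (j : ℝ)) * (x - y) ≤ 1 * (x - y) :=
        mul_le_mul_of_nonneg_right (by linarith) (by linarith)
      have h4 : x - y ≤ 1 / α := by rw [hz] at hzy; linarith
      linarith
    have hval : ∀ y : ℝ, ψ j x - 1 / α ≤ ψ j y := by
      intro y
      rcases le_total y z with hy | hy
      · have hanti : AntitoneOn (ψ j) (Set.Iic z) := by
          apply antitoneOn_of_deriv_nonpos (convex_Iic z)
          · exact (hψdiff j).continuous.continuousOn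
          · exact (hψdiff j).differentiableOn
          · intro s hs
            rw [interior_Iic] at hs
            rw [hψderiv]
            have := hφmono hs.le
            linarith
        have h1 := hanti (Set.mem_Iic.2 hy) (Set.mem_Iic.2 le_rfl) hy
        have h2 := hmid z le_rfl hzx
        clear_value ψ j z
        linarith
      · rcases le_total y x with hyx | hxy
        · have h5 := hmid y hy hyx
          clear_value ψ j z
          linarith
        · have h1 := hψmonOn j x hj1 (Set.mem_Ici.2 le_rfl) (Set.mem_Ici.2 hxy) hxy
          clear_value ψ j z
          linarith
    have hbj : ψ j x - 1 / α ≤ b j := by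
      apply le_csInf (Set.range_nonempty (ψ j))
      rintro r ⟨y, rfl⟩
      exact hval y
    have h5 : Φ x = ψ j x + (j : ℝ) * x := by simp only [hψdef]; ring
    have h6 := hjleT j x
    linarith
  set x₀ : ℝ := A + 1 / α with hx₀
  set C : ℝ := max (1 / α) (Φ x₀ - b 0) with hC
  have hCpos : 0 < C := lt_of_lt_of_le (by positivity) (le_max_left _ _)
  have hmain : ∀ x : ℝ, Φ x ≤ C + T x := by
    intro x
    rcases le_total x x₀ with hx | hx
    · have h1 : Φ x ≤ Φ x₀ := hΦmono hx
      have h2 : Φ x₀ - b 0 ≤ C := le_max_right _ _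
      have h3 := hb0leT x
      linarith
    · have := hkey x hx
      have h2 : 1 / α ≤ C := le_max_left _ _
      linarith
  -- b 0 = log (w 0)
  have hΦtend : Tendsto Φ atBot (𝓝 (Real.log (w 0))) := by
    have h1 : Tendsto (fun x : ℝ => w (Real.exp x)) atBot (𝓝 (w 0)) := by
      have hw0 : ContinuousWithinAt w (Set.Ici 0) 0 := hcont 0 (by simp)
      apply hw0.tendsto.comp
      apply tendsto_nhdsWithin_of_tendsto_nhds_of_eventually_within _ Real.tendsto_exp_atBot
      exact Filter.Eventually.of_forall fun x => (Real.exp_pos x).le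
    exact ((Real.continuousAt_log (ne_of_gt (hpos 0 le_rfl))).tendsto).comp h1
  have hb0 : b 0 = Real.log (w 0) := by
    apply le_antisymm
    · apply ge_of_tendsto hΦtend
      apply Filter.Eventually.of_forall
      intro x
      have := hbleψ 0 x
      simp only [hψdef] at this
      simpa using this
    · apply le_csInf (Set.range_nonempty (ψ 0))
      rintro r ⟨y, rfl⟩
      simp only [hψdef]
      simpa using hL y
  -- the tropical weight
  set v : ℝ → ℝ := fun t => if t = 0 then w 0 else Real.exp (T (Real.log t)) with hvdef
  have hv0 : v 0 = Real.exp (b 0) := by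
    rw [hvdef]; simp [hb0, Real.exp_log (hpos 0 le_rfl)]
  have hvpos : ∀ t : ℝ, 0 < v t := by
    intro t
    rw [hvdef]
    by_cases ht : t = 0
    · simp [ht, hpos 0 le_rfl]
    · simp [ht, Real.exp_pos]
  have hvmono : MonotoneOn v (Set.Ici 0) := by
    intro s hs t ht hst
    by_cases hs0 : s = 0
    · subst hs0
      by_cases ht0 : t = 0
      · subst ht0; rfl
      · rw [hvdef]
        simp only [if_pos rfl, if_neg ht0]
        calc w 0 = Real.exp (b 0) := by
              rw [hb0, Real.exp_log (hpos 0 le_rfl)]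
          _ ≤ Real.exp (T (Real.log t)) := Real.exp_le_exp.2 (hb0leT _)
    · have hspos : 0 < s := lt_of_le_of_ne hs (Ne.symm hs0)
      have htpos : 0 < t := lt_of_lt_of_le hspos hst
      rw [hvdef]
      simp only [if_neg hs0, if_neg (ne_of_gt htpos)]
      exact Real.exp_le_exp.2 (hTmono (Real.log_le_log hspos hst))
  have hvcont : ContinuousOn v (Set.Ici 0) := by
    intro t ht
    by_cases ht0 : t = 0
    · subst ht0
      have hIci : Set.Ici (0 : ℝ) = insert 0 (Set.Ioi 0) := by rw [Set.Ioi_insert]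
      rw [hIci]
      show Filter.Tendsto v (𝓝[insert (0:ℝ) (Set.Ioi 0)] 0) (𝓝 (v 0))
      rw [nhdsWithin_insert, Filter.tendsto_sup]
      refine ⟨tendsto_pure_nhds v 0, ?_⟩
      rw [hv0]
      have hupper : Tendsto (fun t : ℝ => Real.exp (Φ (Real.log t))) (𝓝[>] (0 : ℝ))
          (𝓝 (Real.exp (b 0))) := by
        apply Real.continuous_exp.continuousAt.tendsto.comp
        rw [hb0]
        exact hΦtend.comp Real.tendsto_log_nhdsGT_zero
      apply tendsto_of_tendsto_of_tendsto_of_le_of_le' tendsto_const_nhds hupper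
      · filter_upwards [self_mem_nhdsWithin] with s hs
        rw [hvdef]
        simp only [if_neg (ne_of_gt (Set.mem_Ioi.1 hs))]
        exact Real.exp_le_exp.2 (hb0leT _)
      · filter_upwards [self_mem_nhdsWithin] with s hs
        rw [hvdef]
        simp only [if_neg (ne_of_gt (Set.mem_Ioi.1 hs))]
        exact Real.exp_le_exp.2 (hTleΦ _)
    · have htpos : 0 < t := lt_of_le_of_ne ht (Ne.symm ht0)
      apply ContinuousAt.continuousWithinAt
      have hg : ContinuousAt (fun s : ℝ => Real.exp (T (Real.log s))) t :=
        Real.continuous_exp.continuousAt.comp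
          (hTcont.continuousAt.comp (Real.continuousAt_log (ne_of_gt htpos)))
      apply hg.congr_of_eventuallyEq
      filter_upwards [eventually_ne_nhds ht0] with s hs
      rw [hvdef]
      simp [hs]
  have hvunb : ∀ M : ℝ, ∃ t : ℝ, 0 ≤ t ∧ M < v t := by
    intro M
    set x : ℝ := max 0 (Real.log (max M 1) - b 1 + 1) with hx
    refine ⟨Real.exp x, (Real.exp_pos x).le, ?_⟩
    have hne : Real.exp x ≠ 0 := ne_of_gt (Real.exp_pos x)
    have hvx : v (Real.exp x) = Real.exp (T x) := by
      rw [hvdef]; simp [hne, Real.log_exp]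
    rw [hvx]
    have h1 : Real.log (max M 1) - b 1 + 1 ≤ x := le_max_right _ _
    have h2 : b 1 + (1 : ℕ) * x ≤ T x := hjleT 1 x
    have h3 : Real.log (max M 1) < T x := by
      push_cast at h2
      linarith
    have h4 : max M 1 = Real.exp (Real.log (max M 1)) :=
      (Real.exp_log (lt_of_lt_of_le one_pos (le_max_right M 1))).symm
    calc M ≤ max M 1 := le_max_left _ _
      _ = Real.exp (Real.log (max M 1)) := h4
      _ < Real.exp (T x) := Real.exp_lt_exp.2 h3
  refine ⟨v, ⟨fun t _ => hvpos t, hvmono, hvcont, hvunb⟩, ?_, 1, Real.exp C, one_pos,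
    Real.exp_pos C, ?_⟩
  · refine ⟨Set.univ, b, ⟨0, Set.mem_univ 0⟩, hFbdd, ?_⟩
    intro x
    have hne : Real.exp x ≠ 0 := ne_of_gt (Real.exp_pos x)
    rw [hvdef]
    simp only [if_neg hne, Real.log_exp]
    rfl
  · intro t ht
    by_cases ht0 : t = 0
    · subst ht0
      constructor
      · rw [one_mul, hv0, hb0, Real.exp_log (hpos 0 le_rfl)]
      · rw [hv0, hb0, Real.exp_log (hpos 0 le_rfl)]
        have h1 : (1 : ℝ) ≤ Real.exp C := Real.one_le_exp hCpos.le
        nlinarith [hpos 0 le_rfl]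
    · have htpos : 0 < t := lt_of_le_of_ne ht (Ne.symm ht0)
      have hvt : v t = Real.exp (T (Real.log t)) := by rw [hvdef]; simp [ht0]
      have hwt : w t = Real.exp (Φ (Real.log t)) := by
        rw [hexpΦ (Real.log t), Real.exp_log htpos]
      constructor
      · rw [one_mul, hvt, hwt]
        exact Real.exp_le_exp.2 (hTleΦ _)
      · rw [hvt, hwt, ← Real.exp_add]
        exact Real.exp_le_exp.2 (hmain _)
end

section
/- Let w : [0,∞) → (0,∞) be a rapid weight function that is log-convex and C²-smooth, with Φ(x) = log w(e^x). If limsup_{x→+∞} Φ''(x) = 0, then w is NOT equivalent to any log-tropical weight function. -/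
set_option maxHeartbeats 1000000 in
/-- Let `w` be a rapid weight, log-convex and C²-smooth in the sense that
`Φ(x) = log w(e^x)` is convex and C² on `ℝ`. If `limsup_{x→+∞} Φ''(x) = 0` (i.e. `Φ''`
is eventually smaller than every `ε > 0`), then `w` is NOT equivalent to any
log-tropical weight function. -/
theorem limsup_zero_implies_not_logTropical (w : ℝ → ℝ) (hw : IsWeight w)
    (hrapid : ∀ k : ℕ, Filter.Tendsto (fun t : ℝ => w t / t ^ k)
      Filter.atTop Filter.atTop)
    (hconv : ConvexOn ℝ Set.univ (fun x : ℝ => Real.log (w (Real.exp x))))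
    (hC2 : ContDiff ℝ 2 (fun x : ℝ => Real.log (w (Real.exp x))))
    (hlimsup : ∀ ε : ℝ, 0 < ε → ∃ A : ℝ, ∀ x : ℝ, A ≤ x →
      iteratedDeriv 2 (fun x : ℝ => Real.log (w (Real.exp x))) x < ε) :
    ¬ ∃ v : ℝ → ℝ, IsWeight v ∧ LogTropical v ∧
        ∃ C₁ C₂ : ℝ, 0 < C₁ ∧ 0 < C₂ ∧
          ∀ t : ℝ, 0 ≤ t → C₁ * v t ≤ w t ∧ w t ≤ C₂ * v t := by
  rintro ⟨v, hv, ⟨E, b, hEne, hbdd, hlog⟩, C₁, C₂, hC₁, hC₂, hcomp⟩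
  set Φ : ℝ → ℝ := fun x : ℝ => Real.log (w (Real.exp x)) with hΦdef
  set Ψ : ℝ → ℝ := fun x : ℝ => sSup ((fun j : ℕ => b j + j * x) '' E) with hΨdef
  set c₁ : ℝ := Real.log C₁ with hc₁
  set c₂ : ℝ := Real.log C₂ with hc₂
  -- Comparison between Φ and Ψ
  have hcompΦ : ∀ x : ℝ, Ψ x + c₁ ≤ Φ x ∧ Φ x ≤ Ψ x + c₂ := by
    intro x
    set t := Real.exp x with ht
    have ht0 : (0:ℝ) ≤ t := (Real.exp_pos x).le
    have hvt : 0 < v t := hv.1 t ht0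
    obtain ⟨hlo, hhi⟩ := hcomp t ht0
    have hwt : 0 < w t := hw.1 t ht0
    have hΨx : Real.log (v t) = Ψ x := hlog x
    have hΦx : Φ x = Real.log (w t) := rfl
    constructor
    · have h1 : Real.log (C₁ * v t) ≤ Real.log (w t) :=
        Real.log_le_log (by positivity) hlo
      rw [Real.log_mul hC₁.ne' hvt.ne'] at h1
      linarith [h1, hΨx, hΦx, hc₁]
    · have h1 : Real.log (w t) ≤ Real.log (C₂ * v t) :=
        Real.log_le_log hwt hhi
      rw [Real.log_mul hC₂.ne' hvt.ne'] at h1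
      linarith [h1, hΨx, hΦx, hc₂]
  set D : ℝ := c₂ - c₁ with hDdef
  have hD0 : 0 ≤ D := by
    obtain ⟨h1, h2⟩ := hcompΦ 0
    simp only [hDdef]; linarith
  set L : ℝ := 8 * D + 9 with hLdef
  have hL : 0 < L := by simp only [hLdef]; linarith
  set ε : ℝ := 1 / (4 * L) with hεdef
  have hε : 0 < ε := by positivity
  have hεL : ε * L = 1 / 4 := by
    rw [hεdef]; field_simp
  obtain ⟨A, hA⟩ := hlimsup ε hε
  clear_value ε L D c₁ c₂
  -- Differentiability facts
  have h21 : (2 : WithTop ℕ∞) = 1 + 1 := by norm_num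
  have hsplit := (contDiff_succ_iff_deriv.mp (h21 ▸ hC2))
  have hd1 : Differentiable ℝ Φ := hsplit.1
  have hC1d : ContDiff ℝ 1 (deriv Φ) := hsplit.2.2
  have hd2 : Differentiable ℝ (deriv Φ) :=
    (contDiff_one_iff_deriv.mp hC1d).1
  have hdcont : Continuous (deriv Φ) := hC1d.continuous
  have hiter : iteratedDeriv 2 Φ = deriv (deriv Φ) := by
    rw [show (2:ℕ) = 1 + 1 from rfl, iteratedDeriv_succ, iteratedDeriv_one]
  have hA' : ∀ x : ℝ, A ≤ x → deriv (deriv Φ) x < ε := by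
    intro x hx
    have := hA x hx
    rwa [hiter] at this
  -- the function g x = ε x - Φ'(x) is monotone on [A, ∞)
  have hg : ∀ x : ℝ, HasDerivAt (fun y : ℝ => ε * y - deriv Φ y)
      (ε - deriv (deriv Φ) x) x := by
    intro x
    have h1 : HasDerivAt (fun y : ℝ => ε * y) (ε * 1) x :=
      (hasDerivAt_id x).const_mul ε
    exact (h1.sub (hd2 x).hasDerivAt).congr_deriv (by ring)
  have hgdiff : Differentiable ℝ (fun y : ℝ => ε * y - deriv Φ y) :=
    fun x => (hg x).differentiableAt
  have hgmono : MonotoneOn (fun y : ℝ => ε * y - deriv Φ y) (Set.Ici A) := by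
    apply monotoneOn_of_deriv_nonneg (convex_Ici A)
      hgdiff.continuous.continuousOn hgdiff.differentiableOn
    intro x hx
    rw [interior_Ici] at hx
    rw [(hg x).deriv]
    have := hA' x (le_of_lt hx)
    linarith
  -- derivative increment bound on [A, ∞)
  have hderiv_incr : ∀ x y : ℝ, A ≤ x → x ≤ y →
      deriv Φ y - deriv Φ x ≤ ε * (y - x) := by
    intro x y hx hxy
    have := hgmono (Set.mem_Ici.mpr hx) (Set.mem_Ici.mpr (hx.trans hxy)) hxy
    simp only at this
    nlinarith
  set p : ℝ := A + L with hpdef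
  obtain ⟨m, hm⟩ := exists_nat_ge (deriv Φ p)
  -- find x1 > p with deriv Φ x1 ≥ m + 1, using rapidity
  obtain ⟨B, hB⟩ := Filter.eventually_atTop.mp
    ((hrapid (m + 2)).eventually_ge_atTop 1)
  set x1 : ℝ := max (max (Real.log (max B 1) + 1) (p + 1)) (Φ p - (m + 1) * p)
    with hx1def
  have hx1p : p < x1 := by
    have : p + 1 ≤ x1 := le_max_of_le_left (le_max_right _ _)
    linarith
  have hΦx1 : ((m:ℝ) + 2) * x1 ≤ Φ x1 := by
    have ht1 : (1:ℝ) ≤ Real.exp x1 := by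
      rw [show (1:ℝ) = Real.exp 0 from (Real.exp_zero).symm]
      apply Real.exp_le_exp.mpr
      have h1 : Real.log (max B 1) + 1 ≤ x1 := le_max_of_le_left (le_max_left _ _)
      have h2 : (0:ℝ) ≤ Real.log (max B 1) := Real.log_nonneg (le_max_right _ _)
      linarith
    have htB : B ≤ Real.exp x1 := by
      have h1 : Real.log (max B 1) + 1 ≤ x1 := le_max_of_le_left (le_max_left _ _)
      have h2 : Real.exp (Real.log (max B 1)) = max B 1 :=
        Real.exp_log (by positivity)
      calc B ≤ max B 1 := le_max_left _ _
        _ = Real.exp (Real.log (max B 1)) := h2.symm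
        _ ≤ Real.exp x1 := Real.exp_le_exp.mpr (by linarith)
    have hwge := hB (Real.exp x1) htB
    have hpowpos : (0:ℝ) < (Real.exp x1) ^ (m + 2) := by positivity
    have hwge' : (Real.exp x1) ^ (m + 2) ≤ w (Real.exp x1) := by
      rw [one_le_div hpowpos] at hwge
      exact hwge
    have := Real.log_le_log hpowpos hwge'
    rw [Real.log_pow, Real.log_exp] at this
    have hΦeq : Φ x1 = Real.log (w (Real.exp x1)) := rfl
    rw [hΦeq]
    push_cast at this ⊢
    linarith
  have hd1x1 : ((m:ℝ) + 1) ≤ deriv Φ x1 := by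
    have hslope := hconv.slope_le_deriv (Set.mem_univ p) (Set.mem_univ x1)
      hx1p (hd1 x1)
    rw [slope_def_field] at hslope
    have hnum : ((m:ℝ) + 1) * (x1 - p) ≤ Φ x1 - Φ p := by
      have h3 : Φ p - (m + 1) * p ≤ x1 := le_max_right _ _
      nlinarith
    have hx1p' : 0 < x1 - p := by linarith
    have hkey : ((m:ℝ) + 1) ≤ (Φ x1 - Φ p) / (x1 - p) := by
      rw [le_div_iff₀ hx1p']; exact hnum
    linarith [hkey, hslope]
  -- IVT: find x0 ∈ [p, x1] with deriv Φ x0 = m + 1/2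
  have hmem : ((m:ℝ) + 1/2) ∈ Set.Icc (deriv Φ p) (deriv Φ x1) := by
    constructor <;> [linarith; linarith]
  obtain ⟨x0, hx0mem, hx0⟩ := intermediate_value_Icc hx1p.le
    hdcont.continuousOn hmem
  have hx0p : p ≤ x0 := hx0mem.1
  have hx0A : A ≤ x0 - L := by simp only [hpdef] at hx0p; linarith
  have hx0A' : A ≤ x0 := by linarith
  -- slope bounds via the mean value theorem
  have hup : Φ (x0 + L) ≤ Φ x0 + ((m:ℝ) + 3/4) * L := by
    obtain ⟨c, hc, hceq⟩ := exists_hasDerivAt_eq_slope Φ (deriv Φ)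
      (show x0 < x0 + L by linarith) hd1.continuous.continuousOn
      (fun x _ => (hd1 x).hasDerivAt)
    have h1 : deriv Φ c - deriv Φ x0 ≤ ε * (c - x0) :=
      hderiv_incr x0 c hx0A' hc.1.le
    have h2 : ε * (c - x0) ≤ ε * L := by
      apply mul_le_mul_of_nonneg_left _ hε.le
      have := hc.2; linarith
    have h3 : deriv Φ c ≤ (m:ℝ) + 3/4 := by
      rw [hx0] at h1; linarith [hεL]
    rw [hceq] at h3
    have hL' : x0 + L - x0 = L := by ring
    rw [hL', div_le_iff₀ hL] at h3
    linarith
  have hdown : Φ x0 - ((m:ℝ) + 1/4) * L ≥ Φ (x0 - L) := by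
    obtain ⟨c, hc, hceq⟩ := exists_hasDerivAt_eq_slope Φ (deriv Φ)
      (show x0 - L < x0 by linarith) hd1.continuous.continuousOn
      (fun x _ => (hd1 x).hasDerivAt)
    have h1 : deriv Φ x0 - deriv Φ c ≤ ε * (x0 - c) :=
      hderiv_incr c x0 (le_trans hx0A hc.1.le) hc.2.le
    have h2 : ε * (x0 - c) ≤ ε * L := by
      apply mul_le_mul_of_nonneg_left _ hε.le
      have := hc.1; linarith
    have h3 : (m:ℝ) + 1/4 ≤ deriv Φ c := by
      rw [hx0] at h1; linarith [hεL]
    rw [hceq] at h3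
    have hL' : x0 - (x0 - L) = L := by ring
    rw [hL', le_div_iff₀ hL] at h3
    linarith
  -- Ψ facts
  have hΨle : ∀ x : ℝ, ∀ j ∈ E, b j + (j:ℝ) * x ≤ Ψ x := by
    intro x j hj
    exact le_csSup (hbdd x) ⟨j, hj, rfl⟩
  have hΨne : ((fun j : ℕ => b j + (j:ℝ) * x0) '' E).Nonempty :=
    hEne.image _
  obtain ⟨y, hy, hylt⟩ := exists_lt_of_lt_csSup hΨne
    (show Ψ x0 - 1 < Ψ x0 by linarith)
  obtain ⟨j, hjE, rfl⟩ := hy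
  -- case split on j vs m
  rcases le_or_gt j m with hjm | hjm
  · -- j ≤ m : look to the left
    have h1 : Ψ x0 - 1 - (m:ℝ) * L ≤ Ψ (x0 - L) := by
      have h2 := hΨle (x0 - L) j hjE
      have hcast : (j:ℝ) ≤ (m:ℝ) := Nat.cast_le.mpr hjm
      have hylt' : Ψ x0 - 1 < b j + (j:ℝ) * x0 := hylt
      nlinarith [mul_le_mul_of_nonneg_right hcast hL.le]
    obtain ⟨hlo1, hhi1⟩ := hcompΦ (x0 - L)
    obtain ⟨hlo0, hhi0⟩ := hcompΦ x0
    -- Φ(x0-L) ≥ Ψ(x0-L) + c₁ ≥ Ψ x0 - 1 - mL + c₁ ≥ Φ x0 - c₂ + c₁ - 1 - mL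
    -- Φ(x0-L) ≤ Φ x0 - (m+1/4) L
    have : (1/4 : ℝ) * L ≤ D + 1 := by nlinarith
    rw [hLdef] at this
    linarith
  · -- m + 1 ≤ j : look to the right
    have hcast : (m:ℝ) + 1 ≤ (j:ℝ) := by exact_mod_cast hjm
    have h1 : Ψ x0 - 1 + ((m:ℝ) + 1) * L ≤ Ψ (x0 + L) := by
      have h2 := hΨle (x0 + L) j hjE
      have hylt' : Ψ x0 - 1 < b j + (j:ℝ) * x0 := hylt
      nlinarith [mul_le_mul_of_nonneg_right hcast hL.le]
    obtain ⟨hlo1, hhi1⟩ := hcompΦ (x0 + L)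
    obtain ⟨hlo0, hhi0⟩ := hcompΦ x0
    have : (1/4 : ℝ) * L ≤ D + 1 := by nlinarith
    rw [hLdef] at this
    linarith
end

section
/- Let w_α(t) = exp((log t)^α) for t > e (extended to a weight function on [0,∞)) with α > 1. If α ≥ 2 then w_α is equivalent to a log-tropical weight function, while if 1 < α < 2 then w_α is not equivalent to any log-tropical weight function. -/
open Real Set

lemma tangent_conv {α x y : ℝ} (hα : 1 ≤ α) (hy : 0 < y) (hx : 0 ≤ x) :
    y ^ α + α * y ^ (α - 1) * (x - y) ≤ x ^ α := by
  have hs : -1 ≤ x / y - 1 := by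
    have : 0 ≤ x / y := div_nonneg hx hy.le
    linarith
  have h := one_add_mul_self_le_rpow_one_add hs hα
  have h1 : (1 + (x / y - 1)) = x / y := by ring
  rw [h1] at h
  have h2 : (x / y) ^ α = x ^ α / y ^ α := Real.div_rpow hx hy.le α
  rw [h2] at h
  have hyα : (0:ℝ) < y ^ α := Real.rpow_pos_of_pos hy α
  have h3 := mul_le_mul_of_nonneg_left h hyα.le
  have h4 : y ^ α * (x ^ α / y ^ α) = x ^ α := by field_simp
  rw [h4] at h3
  have h5 : y ^ (α - 1) = y ^ α / y := Real.rpow_sub_one hy.ne' α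
  rw [h5]
  calc y ^ α + α * (y ^ α / y) * (x - y) = y ^ α * (1 + α * (x / y - 1)) := by
        field_simp
    _ ≤ x ^ α := h3

lemma tangent_conc {p x y : ℝ} (hp0 : 0 ≤ p) (hp1 : p ≤ 1) (hy : 0 < y) (hx : 0 ≤ x) :
    x ^ p ≤ y ^ p + p * y ^ (p - 1) * (x - y) := by
  have hs : -1 ≤ x / y - 1 := by
    have : 0 ≤ x / y := div_nonneg hx hy.le
    linarith
  have h := rpow_one_add_le_one_add_mul_self hs hp0 hp1
  have h1 : (1 + (x / y - 1)) = x / y := by ring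
  rw [h1] at h
  have h2 : (x / y) ^ p = x ^ p / y ^ p := Real.div_rpow hx hy.le p
  rw [h2] at h
  have hyp : (0:ℝ) < y ^ p := Real.rpow_pos_of_pos hy p
  have h3 := mul_le_mul_of_nonneg_left h hyp.le
  have h4 : y ^ p * (x ^ p / y ^ p) = x ^ p := by field_simp
  rw [h4] at h3
  have h5 : y ^ (p - 1) = y ^ p / y := Real.rpow_sub_one hy.ne' p
  rw [h5]
  calc x ^ p ≤ y ^ p * (1 + p * (x / y - 1)) := h3
    _ = y ^ p + p * (y ^ p / y) * (x - y) := by field_simp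

noncomputable def xj (α : ℝ) (j : ℕ) : ℝ := ((j : ℝ) / α) ^ (1 / (α - 1))
noncomputable def bc (α : ℝ) (j : ℕ) : ℝ := xj α j ^ α - j * xj α j
noncomputable def gfun (α : ℝ) (x : ℝ) : ℝ :=
  sSup ((fun j : ℕ => bc α j + j * x) '' Set.univ)

section facts
variable {α : ℝ} (hα : 1 < α)
include hα

lemma hα0 : 0 < α := by linarith
lemma xj_zero : xj α 0 = 0 := by
  have h : (1 / (α - 1)) ≠ 0 := one_div_ne_zero (by linarith)
  simp only [xj, Nat.cast_zero, zero_div]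
  exact Real.zero_rpow h
lemma xj_nonneg (j : ℕ) : 0 ≤ xj α j := Real.rpow_nonneg (by positivity) _
lemma xj_pos {j : ℕ} (hj : 1 ≤ j) : 0 < xj α j := by
  apply Real.rpow_pos_of_pos
  have : (0:ℝ) < (j:ℝ) := by exact_mod_cast hj
  positivity

lemma xj_slope (j : ℕ) : α * xj α j ^ (α - 1) = j := by
  rcases Nat.eq_zero_or_pos j with rfl | hj
  · rw [xj_zero hα]
    rw [Real.zero_rpow (by linarith : α - 1 ≠ 0)]
    simp
  · have h1 : xj α j ^ (α - 1) = ((j:ℝ)/α) ^ ((1/(α-1)) * (α-1)) := by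
      rw [Real.rpow_mul (by positivity : (0:ℝ) ≤ (j:ℝ)/α)]
      rfl
    have h2 : (1/(α-1)) * (α-1) = 1 := by
      rw [one_div, inv_mul_cancel₀ (by linarith : α - 1 ≠ 0)]
    rw [h1, h2, Real.rpow_one]
    field_simp

lemma bc_zero : bc α 0 = 0 := by
  simp [bc, xj_zero hα, Real.zero_rpow (by linarith : α ≠ 0)]

lemma xj_pow_eq {j : ℕ} (hj : 1 ≤ j) : xj α j ^ α = ((j:ℝ)/α) * xj α j := by
  have hxjpos := xj_pos hα hj
  have hα0 : (0:ℝ) < α := by linarith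
  have h : xj α j ^ (α - 1) = (j:ℝ)/α := by
    have hs := xj_slope hα j
    field_simp
    linarith
  calc xj α j ^ α = xj α j ^ (α - 1 + 1) := by rw [show α - 1 + 1 = α by ring]
    _ = xj α j ^ (α-1) * xj α j := Real.rpow_add_one hxjpos.ne' (α-1)
    _ = ((j:ℝ)/α) * xj α j := by rw [h]

lemma bc_line_nonpos {R : ℝ} {j : ℕ} (hj : α * (max 0 (R*α/(α-1))) ^ (α-1) ≤ (j:ℝ))
    {x : ℝ} (hx : x ≤ R) : bc α j + j * x ≤ 0 := by
  have hα0 : (0:ℝ) < α := by linarith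
  set Q := max 0 (R*α/(α-1)) with hQ
  have hQ0 : 0 ≤ Q := le_max_left _ _
  rcases Nat.eq_zero_or_pos j with rfl | hjpos
  · simp [bc_zero hα]
  · have hj1ℝ : (0:ℝ) < (j:ℝ) := by exact_mod_cast hjpos
    have hxjQ : Q ≤ xj α j := by
      have h1 : Q ^ (α-1) ≤ (j:ℝ)/α := by
        rw [le_div_iff₀ hα0]; nlinarith
      have h2 : (Q ^ (α-1)) ^ (1/(α-1)) ≤ ((j:ℝ)/α) ^ (1/(α-1)) :=
        Real.rpow_le_rpow (Real.rpow_nonneg hQ0 _) h1 (div_nonneg zero_le_one (by linarith))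
      have h3 : (Q ^ (α-1)) ^ (1/(α-1)) = Q := by
        rw [← Real.rpow_mul hQ0, mul_one_div, div_self (by linarith : α - 1 ≠ 0),
          Real.rpow_one]
      rw [h3] at h2; exact h2
    have hQR : R*α/(α-1) ≤ Q := le_max_right _ _
    have hRxj : R * α ≤ (α - 1) * xj α j := by
      have := (div_le_iff₀ (by linarith : (0:ℝ) < α - 1)).mp hQR
      nlinarith [mul_le_mul_of_nonneg_right hxjQ (by linarith : (0:ℝ) ≤ α - 1)]
    have hbc : bc α j = ((j:ℝ)/α) * xj α j - j * xj α j := by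
      rw [bc, xj_pow_eq hα hjpos]
    rw [hbc]
    have hjx : (j:ℝ) * x ≤ j * R := mul_le_mul_of_nonneg_left hx hj1ℝ.le
    have hkey : ((j:ℝ)/α) * xj α j - j * xj α j + j * R ≤ 0 := by
      have h4 : (j:ℝ) * (R * α) ≤ j * ((α - 1) * xj α j) :=
        mul_le_mul_of_nonneg_left hRxj hj1ℝ.le
      have h5 : ((j:ℝ)/α) * xj α j - j * xj α j + j * R =
          ((j:ℝ) * (R * α) - j * ((α-1) * xj α j)) / α := by
        field_simp
        ring
      rw [h5]
      apply div_nonpos_of_nonpos_of_nonneg (by linarith) hα0.le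
    linarith

lemma bc_nonpos (j : ℕ) : bc α j ≤ 0 := by
  rcases Nat.eq_zero_or_pos j with rfl | hj
  · rw [bc_zero hα]
  · have hx := xj_pos hα hj
    have hs := xj_slope hα j
    have hxa : xj α j ^ α = xj α j ^ (α - 1) * xj α j := by
      rw [← Real.rpow_add_one hx.ne' (α - 1)]; ring_nf
    have hj1 : (1:ℝ) ≤ (j:ℝ) := by exact_mod_cast hj
    have hjα : xj α j ^ (α-1) = (j:ℝ)/α := by
      field_simp at hs ⊢; linarith [hs]
    rw [bc, hxa, hjα]
    have : (j:ℝ)/α ≤ (j:ℝ) := by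
      apply div_le_self (by positivity) (by linarith)
    nlinarith [hx]

lemma ell_le_rpow {x : ℝ} (hx : 0 ≤ x) (j : ℕ) : bc α j + j * x ≤ x ^ α := by
  rcases Nat.eq_zero_or_pos j with rfl | hj
  · rw [bc_zero hα]
    simpa using Real.rpow_nonneg hx α
  · have hy := xj_pos hα hj
    have h := tangent_conv (le_of_lt hα) hy hx
    rw [xj_slope hα j] at h
    calc bc α j + j * x = xj α j ^ α + (j:ℝ) * (x - xj α j) := by rw [bc]; ring
      _ ≤ x ^ α := h

lemma ell_bound (x : ℝ) (j : ℕ) : bc α j + j * x ≤ (max x 0) ^ α := by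
  rcases le_or_gt x 0 with hx | hx
  · have h1 : bc α j + j * x ≤ 0 := by
      have := bc_nonpos hα j
      have : (j:ℝ) * x ≤ 0 := mul_nonpos_of_nonneg_of_nonpos (by positivity) hx
      linarith [bc_nonpos hα j]
    rw [max_eq_right hx, Real.zero_rpow (by linarith : α ≠ 0)]
    exact h1
  · rw [max_eq_left hx.le]
    exact ell_le_rpow hα hx.le j

lemma g_bddAbove (x : ℝ) : BddAbove ((fun j : ℕ => bc α j + j * x) '' Set.univ) := by
  refine ⟨(max x 0) ^ α, ?_⟩
  rintro y ⟨j, -, rfl⟩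
  exact ell_bound hα x j

lemma g_nonneg (x : ℝ) : 0 ≤ gfun α x := by
  have h0 : (0:ℝ) ∈ (fun j : ℕ => bc α j + j * x) '' Set.univ :=
    ⟨0, trivial, by simp [bc_zero hα]⟩
  exact le_csSup (g_bddAbove hα x) h0

omit hα in
lemma g_ne (x : ℝ) : ((fun j : ℕ => bc α j + j * x) '' Set.univ).Nonempty :=
  ⟨(fun j : ℕ => bc α j + j * x) 0, 0, trivial, rfl⟩

lemma g_le (x : ℝ) : gfun α x ≤ (max x 0) ^ α := by
  apply csSup_le (g_ne x)
  rintro y ⟨j, -, rfl⟩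
  exact ell_bound hα x j

lemma g_eq_zero {x : ℝ} (hx : x ≤ 0) : gfun α x = 0 := by
  apply le_antisymm
  · have := g_le hα x
    rwa [max_eq_right hx, Real.zero_rpow (by linarith : α ≠ 0)] at this
  · exact g_nonneg hα x

lemma g_mono : Monotone (gfun α) := by
  intro x y hxy
  apply csSup_le (g_ne x)
  rintro z ⟨j, -, rfl⟩
  have h1 : bc α j + j * x ≤ bc α j + j * y := by
    have : (j:ℝ) * x ≤ j * y := mul_le_mul_of_nonneg_left hxy (by positivity)
    linarith
  exact h1.trans (le_csSup (g_bddAbove hα y) ⟨j, trivial, rfl⟩)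

lemma ell_mem_le (x : ℝ) (j : ℕ) : bc α j + j * x ≤ gfun α x :=
  le_csSup (g_bddAbove hα x) ⟨j, trivial, rfl⟩

noncomputable def xbar (α : ℝ) : ℝ := ((α+1)/α) ^ (1/(α-1))

lemma g_lower (hα2 : 2 ≤ α) {x : ℝ} (hx : 0 ≤ x) :
    x ^ α ≤ gfun α x + max 1 (xbar α ^ α) := by
  have hα0 : (0:ℝ) < α := by linarith
  have hp0 : (0:ℝ) ≤ 1/(α-1) := div_nonneg zero_le_one (by linarith)
  have hp1 : 1/(α-1) ≤ 1 := by
    rw [div_le_one (by linarith)]; linarith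
  have hxbar_nonneg : 0 ≤ xbar α := Real.rpow_nonneg (by positivity) _
  have hxbar_pow : xbar α ^ (α - 1) = (α+1)/α := by
    rw [xbar, ← Real.rpow_mul (by positivity), one_div,
      inv_mul_cancel₀ (by linarith : α - 1 ≠ 0), Real.rpow_one]
  rcases le_or_gt x (xbar α) with hcase | hcase
  · have h1 : x ^ α ≤ xbar α ^ α := Real.rpow_le_rpow hx hcase hα0.le
    have h2 := g_nonneg hα x
    have := le_max_right (1:ℝ) (xbar α ^ α)
    linarith
  · have hxpos : 0 < x := lt_of_le_of_lt hxbar_nonneg hcase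
    set s := α * x ^ (α - 1) with hs_def
    have hxp_pos : 0 < x ^ (α-1) := Real.rpow_pos_of_pos hxpos _
    have hs_pos : 0 < s := by positivity
    have hs_ge : α + 1 ≤ s := by
      have h1 : xbar α ^ (α-1) ≤ x ^ (α-1) :=
        Real.rpow_le_rpow hxbar_nonneg hcase.le (by linarith)
      rw [hxbar_pow] at h1
      calc α + 1 = α * ((α+1)/α) := by field_simp
        _ ≤ α * x ^ (α-1) := by nlinarith
    set j := ⌊s⌋₊ with hj_def
    have hjs : (j:ℝ) ≤ s := Nat.floor_le hs_pos.le
    have hsj : s ≤ (j:ℝ) + 1 := (Nat.lt_floor_add_one s).le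
    have hjα : α ≤ (j:ℝ) := by linarith
    have hj1 : 1 ≤ j := by exact_mod_cast (by linarith : (1:ℝ) ≤ (j:ℝ))
    have hxeq : (s/α) ^ (1/(α-1)) = x := by
      have h1 : s/α = x ^ (α-1) := by
        rw [hs_def, mul_comm, mul_div_assoc, div_self hα0.ne', mul_one]
      rw [h1, ← Real.rpow_mul hxpos.le]
      rw [mul_one_div, div_self (by linarith : α - 1 ≠ 0), Real.rpow_one]
    have hxj_le : xj α j ≤ x := by
      rw [← hxeq, xj]
      exact Real.rpow_le_rpow (by positivity) (by gcongr) hp0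
    -- x - xj ≤ 1
    have hdiff : x - xj α j ≤ 1 := by
      have hj_pos : (0:ℝ) < (j:ℝ)/α := by
        have : (0:ℝ) < (j:ℝ) := by exact_mod_cast hj1
        positivity
      have htc := tangent_conc hp0 hp1 hj_pos (by positivity : (0:ℝ) ≤ s/α)
      rw [hxeq] at htc
      have hq1 : ((j:ℝ)/α) ^ (1/(α-1) - 1) ≤ 1 :=
        Real.rpow_le_one_of_one_le_of_nonpos
          ((one_le_div hα0).mpr hjα) (by linarith)
      have hq0 : (0:ℝ) ≤ ((j:ℝ)/α) ^ (1/(α-1) - 1) := Real.rpow_nonneg hj_pos.le _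
      have hr : s/α - (j:ℝ)/α ≤ 1 := by
        rw [div_sub_div_same, div_le_one hα0]; linarith
      have hr0 : (0:ℝ) ≤ s/α - (j:ℝ)/α := by
        rw [div_sub_div_same]
        exact div_nonneg (by linarith) hα0.le
      have : (1/(α-1)) * ((j:ℝ)/α) ^ (1/(α-1) - 1) * (s/α - (j:ℝ)/α) ≤ 1 := by
        have h2 : (1/(α-1)) * ((j:ℝ)/α) ^ (1/(α-1) - 1) ≤ 1 := by nlinarith
        have h3 : (0:ℝ) ≤ (1/(α-1)) * ((j:ℝ)/α) ^ (1/(α-1) - 1) := by positivity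
        nlinarith
      have hxjeq : xj α j = ((j:ℝ)/α) ^ (1/(α-1)) := rfl
      rw [← hxjeq] at htc
      linarith
    have hdiff0 : 0 ≤ x - xj α j := by linarith
    -- tangent at x, evaluated at xj
    have htv := tangent_conv hα.le hxpos (xj_nonneg hα j)
    -- htv : x^α + α x^(α-1) (xj - x) ≤ xj^α
    have hsj_bound : (s - j) * (x - xj α j) ≤ 1 := by nlinarith
    have hbc : bc α j + j * x = xj α j ^ α + j * (x - xj α j) := by rw [bc]; ring
    have hell := ell_mem_le hα x j
    have hmax := le_max_left (1:ℝ) (xbar α ^ α)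
    nlinarith

omit hα in
lemma cont_finset_sup' (s : Finset ℕ) (hs : s.Nonempty) (f : ℕ → ℝ → ℝ)
    (hf : ∀ j, Continuous (f j)) : Continuous fun x => s.sup' hs fun j => f j x := by
  induction hs using Finset.Nonempty.cons_induction with
  | singleton a => simpa using hf a
  | cons a s ha hs ih =>
      have h2 : Continuous fun x => max (f a x) (s.sup' hs fun j => f j x) := (hf a).max ih
      convert h2 using 1
      funext x
      exact Finset.sup'_cons hs (fun j => f j x)

lemma g_loc (R : ℝ) : ∃ J : ℕ, ∀ x : ℝ, x ≤ R →
    gfun α x = (Finset.range (J+1)).sup' (by simp) (fun j => bc α j + j * x) := by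
  refine ⟨⌈α * (max 0 (R*α/(α-1))) ^ (α-1)⌉₊, fun x hx => ?_⟩
  set J := ⌈α * (max 0 (R*α/(α-1))) ^ (α-1)⌉₊ with hJ
  apply le_antisymm
  · apply csSup_le (g_ne x)
    rintro z ⟨j, -, rfl⟩
    rcases le_or_gt j J with hjJ | hjJ
    · exact Finset.le_sup' (f := fun j => bc α j + j * x)
        (Finset.mem_range.mpr (by omega))
    · have h1 : α * (max 0 (R*α/(α-1))) ^ (α-1) ≤ (j:ℝ) := by
        calc α * (max 0 (R*α/(α-1))) ^ (α-1) ≤ (J:ℝ) := Nat.le_ceil _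
          _ ≤ (j:ℝ) := by exact_mod_cast hjJ.le
      have h2 : bc α j + j * x ≤ 0 := bc_line_nonpos hα h1 hx
      have h3 : bc α 0 + ((0:ℕ):ℝ) * x ≤ (Finset.range (J+1)).sup'
          (by simp) (fun j => bc α j + j * x) :=
        Finset.le_sup' (f := fun j => bc α j + j * x) (Finset.mem_range.mpr (by omega))
      have h4 : (0:ℝ) ≤ (Finset.range (J+1)).sup' (by simp) (fun j => bc α j + j * x) := by
        have h5 := bc_zero hα
        push_cast at h3
        linarith
      show bc α j + (j:ℝ) * x ≤ _
      linarith
  · apply Finset.sup'_le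
    intro j hj
    exact ell_mem_le hα x j

lemma g_cont : Continuous (gfun α) := by
  rw [continuous_iff_continuousAt]
  intro x
  obtain ⟨J, hJ⟩ := g_loc hα (x + 1)
  have hF : Continuous fun y => (Finset.range (J+1)).sup'
      (by simp : (Finset.range (J+1)).Nonempty) (fun j => bc α j + j * y) := by
    apply cont_finset_sup'
    intro j
    exact continuous_const.add (continuous_const.mul continuous_id)
  apply hF.continuousAt.congr
  filter_upwards [Iio_mem_nhds (lt_add_one x)] with y hy
  exact (hJ y (le_of_lt hy)).symm

end facts

noncomputable def vfun (α t : ℝ) : ℝ := Real.exp (gfun α (Real.log t))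

section weight
variable {α : ℝ} (hα : 1 < α)
include hα

lemma v_one {t : ℝ} (ht0 : 0 ≤ t) (ht : t ≤ 1) : vfun α t = 1 := by
  have h : Real.log t ≤ 0 := Real.log_nonpos ht0 ht
  rw [vfun, g_eq_zero hα h, Real.exp_zero]

lemma v_isWeight : IsWeight (vfun α) := by
  refine ⟨fun t _ => Real.exp_pos _, ?_, ?_, ?_⟩
  · intro s hs t ht hst
    rcases eq_or_lt_of_le (Set.mem_Ici.mp hs : (0:ℝ) ≤ s) with rfl | hspos
    · rw [vfun, Real.log_zero, g_eq_zero hα le_rfl]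
      exact Real.exp_le_exp.mpr (g_nonneg hα _)
    · exact Real.exp_le_exp.mpr (g_mono hα (Real.log_le_log hspos hst))
  · intro t ht
    rcases eq_or_lt_of_le (Set.mem_Ici.mp ht : (0:ℝ) ≤ t) with rfl | hpos
    · have hmem : Set.Ico (0:ℝ) 1 ∈ nhdsWithin 0 (Set.Ici 0) :=
        Ico_mem_nhdsGE_of_mem ⟨le_rfl, one_pos⟩
      apply ContinuousWithinAt.congr_of_eventuallyEq
        (continuousWithinAt_const : ContinuousWithinAt (fun _ => (1:ℝ)) _ _)
      · filter_upwards [hmem] with y hy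
        exact v_one hα hy.1 hy.2.le
      · exact v_one hα le_rfl zero_le_one
    · apply ContinuousAt.continuousWithinAt
      have h1 : ContinuousAt (fun u => Real.exp (gfun α u)) (Real.log t) :=
        (Real.continuous_exp.comp (g_cont hα)).continuousAt
      exact h1.comp (Real.continuousAt_log hpos.ne')
  · intro M
    set x0 := Real.log (max M 1) - bc α 1 + 1 with hx0
    refine ⟨Real.exp x0, (Real.exp_pos _).le, ?_⟩
    have h1 : vfun α (Real.exp x0) = Real.exp (gfun α x0) := by
      rw [vfun, Real.log_exp]
    have h2 : bc α 1 + (1:ℕ) * x0 ≤ gfun α x0 := ell_mem_le hα x0 1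
    have h3 : Real.log (max M 1) + 1 ≤ gfun α x0 := by
      push_cast at h2; linarith
    have h4 : Real.exp (Real.log (max M 1) + 1) ≤ vfun α (Real.exp x0) := by
      rw [h1]; exact Real.exp_le_exp.mpr h3
    have h5 : Real.exp (Real.log (max M 1) + 1) = (max M 1) * Real.exp 1 := by
      rw [Real.exp_add, Real.exp_log (by positivity : (0:ℝ) < max M 1)]
    have h6 : (1:ℝ) < Real.exp 1 := by
      have := Real.exp_one_gt_d9; linarith
    have h7 : M ≤ max M 1 := le_max_left _ _
    have h8 : (0:ℝ) < max M 1 := by positivity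
    nlinarith [h4, h5]

lemma v_logTropical : LogTropical (vfun α) := by
  refine ⟨Set.univ, bc α, ⟨0, trivial⟩, fun x => g_bddAbove hα x, fun x => ?_⟩
  rw [vfun, Real.log_exp, Real.log_exp]
  rfl

lemma part_one (hα2 : 2 ≤ α) (w : ℝ → ℝ) (hw : IsWeight w)
    (hform : ∀ t : ℝ, Real.exp 1 < t → w t = Real.exp (Real.log t ^ α)) :
    ∃ v : ℝ → ℝ, IsWeight v ∧ LogTropical v ∧
      ∃ C₁ C₂ : ℝ, 0 < C₁ ∧ 0 < C₂ ∧
        ∀ t : ℝ, 0 ≤ t → C₁ * v t ≤ w t ∧ w t ≤ C₂ * v t := by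
  have hw0 : 0 < w 0 := hw.1 0 le_rfl
  set D := max 1 (xbar α ^ α) with hD
  refine ⟨vfun α, v_isWeight hα, v_logTropical hα,
    min 1 (w 0 / Real.exp 1), max (Real.exp D) (w (Real.exp 1 + 1)),
    lt_min one_pos (div_pos hw0 (Real.exp_pos 1)),
    lt_of_lt_of_le (Real.exp_pos D) (le_max_left _ _), fun t ht => ?_⟩
  have hvpos : 0 < vfun α t := Real.exp_pos _
  rcases le_or_gt t (Real.exp 1) with hcase | hcase
  · -- small t
    have hlog1 : Real.log t ≤ 1 := by
      rcases eq_or_lt_of_le ht with rfl | hpos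
      · rw [Real.log_zero]; exact zero_le_one
      · exact (Real.log_le_iff_le_exp hpos).mpr hcase
    have hgle : gfun α (Real.log t) ≤ 1 := by
      have h1 := g_le hα (Real.log t)
      have h2 : max (Real.log t) 0 ≤ 1 := max_le hlog1 zero_le_one
      have h3 : (max (Real.log t) 0) ^ α ≤ 1 :=
        Real.rpow_le_one (le_max_right _ _) h2 (by linarith)
      linarith
    have hvle : vfun α t ≤ Real.exp 1 := Real.exp_le_exp.mpr hgle
    have hvge : 1 ≤ vfun α t := by
      rw [show (1:ℝ) = Real.exp 0 from (Real.exp_zero).symm]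
      exact Real.exp_le_exp.mpr (g_nonneg hα _)
    constructor
    · have h1 : min 1 (w 0 / Real.exp 1) * vfun α t ≤ (w 0 / Real.exp 1) * Real.exp 1 :=
        mul_le_mul (min_le_right _ _) hvle hvpos.le
          (div_nonneg hw0.le (Real.exp_pos 1).le)
      have h2 : (w 0 / Real.exp 1) * Real.exp 1 = w 0 := by
        field_simp
      have h3 : w 0 ≤ w t := hw.2.1 Set.self_mem_Ici ht ht
      linarith
    · have h1 : w t ≤ w (Real.exp 1 + 1) := by
        apply hw.2.1 ht (by positivity : (0:ℝ) ≤ Real.exp 1 + 1)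
        linarith
      have h2 : w (Real.exp 1 + 1) ≤ max (Real.exp D) (w (Real.exp 1 + 1)) := le_max_right _ _
      have h3 : max (Real.exp D) (w (Real.exp 1 + 1)) ≤
          max (Real.exp D) (w (Real.exp 1 + 1)) * vfun α t := by
        apply le_mul_of_one_le_right ?_ hvge
        exact le_trans (Real.exp_pos D).le (le_max_left _ _)
      linarith
  · -- large t
    have ht0 : 0 < t := lt_trans (Real.exp_pos 1) hcase
    set x := Real.log t with hxdef
    have hx1 : 1 < x := (Real.lt_log_iff_exp_lt ht0).mpr hcase
    have hwt : w t = Real.exp (x ^ α) := hform t hcase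
    have hgle : gfun α x ≤ x ^ α := by
      have := g_le hα x
      rwa [max_eq_left (by linarith : (0:ℝ) ≤ x)] at this
    have hglow : x ^ α ≤ gfun α x + D := g_lower hα hα2 (by linarith : (0:ℝ) ≤ x)
    constructor
    · have h1 : min 1 (w 0 / Real.exp 1) * vfun α t ≤ 1 * vfun α t :=
        mul_le_mul_of_nonneg_right (min_le_left _ _) hvpos.le
      have h2 : vfun α t ≤ w t := by
        rw [hwt, vfun]
        exact Real.exp_le_exp.mpr hgle
      linarith
    · have h2 : w t ≤ Real.exp D * vfun α t := by
        rw [hwt, vfun, ← Real.exp_add]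
        apply Real.exp_le_exp.mpr
        linarith
      have h3 : Real.exp D * vfun α t ≤ max (Real.exp D) (w (Real.exp 1 + 1)) * vfun α t :=
        mul_le_mul_of_nonneg_right (le_max_left _ _) hvpos.le
      linarith
end weight

set_option maxHeartbeats 1000000 in
lemma part_two {α : ℝ} (hα : 1 < α) (hα2 : α < 2) (w : ℝ → ℝ)
    (hform : ∀ t : ℝ, Real.exp 1 < t → w t = Real.exp (Real.log t ^ α)) :
    ¬ ∃ v : ℝ → ℝ, IsWeight v ∧ LogTropical v ∧
        ∃ C₁ C₂ : ℝ, 0 < C₁ ∧ 0 < C₂ ∧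
          ∀ t : ℝ, 0 ≤ t → C₁ * v t ≤ w t ∧ w t ≤ C₂ * v t := by
  rintro ⟨v, hv, ⟨E, b, hEne, hbdd, hlog⟩, C₁, C₂, hC1, hC2, hcomp⟩
  set G : ℝ → ℝ := fun x => sSup ((fun j : ℕ => b j + j * x) '' E) with hG
  have hα0 : (0:ℝ) < α := by linarith
  have hp0 : (0:ℝ) < α - 1 := by linarith
  have hp1 : α - 1 < 1 := by linarith
  -- comparability on the log scale
  have key : ∀ x : ℝ, 1 < x →
      Real.log C₁ + G x ≤ x ^ α ∧ x ^ α ≤ Real.log C₂ + G x := by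
    intro x hx
    have ht : Real.exp 1 < Real.exp x := Real.exp_lt_exp.mpr hx
    have ht0 : (0:ℝ) ≤ Real.exp x := (Real.exp_pos x).le
    obtain ⟨hL, hU⟩ := hcomp (Real.exp x) ht0
    have hwt : w (Real.exp x) = Real.exp (x ^ α) := by
      rw [hform (Real.exp x) ht, Real.log_exp]
    have hvpos : 0 < v (Real.exp x) := hv.1 _ ht0
    have hGx : Real.log (v (Real.exp x)) = G x := hlog x
    constructor
    · have h1 : Real.log (C₁ * v (Real.exp x)) ≤ Real.log (w (Real.exp x)) :=
        Real.log_le_log (by positivity) hL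
      rwa [Real.log_mul hC1.ne' hvpos.ne', hGx, hwt, Real.log_exp] at h1
    · have h1 : Real.log (w (Real.exp x)) ≤ Real.log (C₂ * v (Real.exp x)) :=
        Real.log_le_log (by rw [hwt]; positivity) hU
      rwa [Real.log_mul hC2.ne' hvpos.ne', hGx, hwt, Real.log_exp] at h1
  obtain ⟨K, hK1, hKc⟩ : ∃ K : ℝ, 1 ≤ K ∧ Real.log C₂ - Real.log C₁ + 1 ≤ K :=
    ⟨max (Real.log C₂ - Real.log C₁ + 1) 1, le_max_right _ _, le_max_left _ _⟩
  obtain ⟨H, hH5, hH4K⟩ : ∃ H : ℝ, 5 ≤ H ∧ 4*K + 1 ≤ H :=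
    ⟨max 5 (4*K+1), le_max_left _ _, le_max_right _ _⟩
  have hHpos : (0:ℝ) < H := by linarith
  obtain ⟨B, hBpos, hBval⟩ : ∃ B : ℝ, 0 < B ∧ B = 8*α*(α-1)*H :=
    ⟨8*α*(α-1)*H, mul_pos (mul_pos (mul_pos (by norm_num) hα0) hp0) hHpos, rfl⟩
  obtain ⟨X, hXH, hXB⟩ : ∃ X : ℝ, H + 2 ≤ X ∧ B ^ (1/(2-α)) + H + 1 ≤ X :=
    ⟨max (H+2) (B ^ (1/(2-α)) + H + 1), le_max_left _ _, le_max_right _ _⟩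
  have hXpos : (0:ℝ) < X := by linarith
  obtain ⟨j, hj⟩ := exists_nat_ge (α * X ^ (α-1))
  obtain ⟨x₀, hslope, hx₀X⟩ : ∃ x₀ : ℝ, α * x₀ ^ (α-1) = (j:ℝ) + 1/2 ∧ X ≤ x₀ := by
    have hjα0 : (0:ℝ) ≤ ((j:ℝ) + 1/2)/α := by positivity
    refine ⟨(((j:ℝ) + 1/2)/α) ^ (1/(α-1)), ?_, ?_⟩
    · rw [← Real.rpow_mul hjα0,
        show 1/(α-1)*(α-1) = 1 by field_simp, Real.rpow_one]
      field_simp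
    · have h1 : X = (X ^ (α-1)) ^ (1/(α-1)) := by
        rw [← Real.rpow_mul hXpos.le, mul_one_div, div_self hp0.ne', Real.rpow_one]
      have h2 : X ^ (α-1) ≤ ((j:ℝ) + 1/2)/α := by
        rw [le_div_iff₀ hα0]
        nlinarith [Real.rpow_nonneg hXpos.le (α-1)]
      rw [h1]
      exact Real.rpow_le_rpow (Real.rpow_nonneg hXpos.le _) h2 (by positivity)
  have hz1 : 1 < x₀ - H := by linarith
  have hzpos : (0:ℝ) < x₀ - H := by linarith
  have hx₀1 : 1 < x₀ := by linarith
  have hx₀pos : (0:ℝ) < x₀ := by linarith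
  have hzB : B ^ (1/(2-α)) ≤ x₀ - H := by linarith
  have hz2 : B ≤ (x₀ - H) ^ (2-α) := by
    have h1 : (B ^ (1/(2-α))) ^ (2-α) ≤ (x₀ - H) ^ (2-α) :=
      Real.rpow_le_rpow (Real.rpow_nonneg hBpos.le _) hzB (by linarith)
    rwa [← Real.rpow_mul hBpos.le, one_div, inv_mul_cancel₀ (by linarith : 2-α ≠ 0),
      Real.rpow_one] at h1
  -- slope variation bound
  have hvar : α * (x₀ + H) ^ (α-1) - α * (x₀ - H) ^ (α-1) ≤ 1/4 := by
    have htc := tangent_conc hp0.le hp1.le hzpos (by linarith : (0:ℝ) ≤ x₀ + H)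
    have hz_exp : (x₀ - H) ^ (α-1-1) = ((x₀ - H) ^ (2-α))⁻¹ := by
      rw [show α - 1 - 1 = -(2-α) by ring, Real.rpow_neg hzpos.le]
    have hzb_pos : (0:ℝ) < (x₀ - H) ^ (2-α) := Real.rpow_pos_of_pos hzpos _
    have hinv : ((x₀ - H) ^ (2-α))⁻¹ ≤ B⁻¹ := inv_anti₀ hBpos hz2
    have h3 : (α-1) * (x₀ - H) ^ (α-1-1) * (x₀ + H - (x₀ - H)) ≤ (α-1) * B⁻¹ * (2*H) := by
      rw [hz_exp, show x₀ + H - (x₀ - H) = 2*H by ring]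
      have h6 := mul_le_mul_of_nonneg_left hinv (by linarith : (0:ℝ) ≤ α-1)
      have h7 : (0:ℝ) ≤ 2*H := by linarith
      nlinarith
    have h4 : (α-1) * B⁻¹ * (2*H) = 1/(4*α) := by
      rw [hBval]; field_simp; ring
    have h5 : (x₀ + H) ^ (α-1) - (x₀ - H) ^ (α-1) ≤ 1/(4*α) := by linarith
    have h6 : α * ((x₀ + H) ^ (α-1) - (x₀ - H) ^ (α-1)) ≤ α * (1/(4*α)) :=
      mul_le_mul_of_nonneg_left h5 hα0.le
    have h7 : α * (1/(4*α)) = 1/4 := by field_simp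
    nlinarith
  have hmono : α * x₀ ^ (α-1) ≤ α * (x₀ + H) ^ (α-1) :=
    mul_le_mul_of_nonneg_left
      (Real.rpow_le_rpow hx₀pos.le (by linarith) hp0.le) hα0.le
  have hmono2 : α * (x₀ - H) ^ (α-1) ≤ α * x₀ ^ (α-1) :=
    mul_le_mul_of_nonneg_left
      (Real.rpow_le_rpow hzpos.le (by linarith) hp0.le) hα0.le
  -- the touching line
  obtain ⟨hK1', hK2'⟩ := key x₀ hx₀1
  have hne : ((fun j : ℕ => b j + j * x₀) '' E).Nonempty := hEne.image _
  obtain ⟨ym, ⟨m, hmE, rfl⟩, hym⟩ :=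
    exists_lt_of_lt_csSup hne (show G x₀ - 1 < G x₀ by linarith)
  have hm_up : ∀ y : ℝ, b m + m * y ≤ G y := fun y =>
    le_csSup (hbdd y) ⟨m, hmE, rfl⟩
  have hm_touch : x₀ ^ α - Real.log C₂ - 1 < b m + m * x₀ := by
    simp only at hym; linarith
  rcases le_or_gt m j with hmj | hmj
  · -- m ≤ j : look at x₀ - H
    have hmjℝ : (m:ℝ) ≤ j := by exact_mod_cast hmj
    obtain ⟨hz_low, -⟩ := key (x₀ - H) hz1
    have hA : b m + m * (x₀ - H) ≤ (x₀ - H) ^ α - Real.log C₁ := by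
      have := hm_up (x₀ - H); linarith
    have htv := tangent_conv hα.le hzpos hx₀pos.le
    rw [show x₀ - (x₀ - H) = H by ring] at htv
    -- htv : (x₀-H)^α + α (x₀-H)^(α-1) * H ≤ x₀^α
    have hslope_z : (m:ℝ) + 1/4 ≤ α * (x₀ - H) ^ (α-1) := by linarith
    have hkey2 : ((m:ℝ) + 1/4) * H ≤ α * (x₀ - H) ^ (α-1) * H :=
      mul_le_mul_of_nonneg_right hslope_z hHpos.le
    have he1 : ((m:ℝ) + 1/4) * H = m * H + H/4 := by ring
    have he2 : (m:ℝ) * x₀ - m * (x₀ - H) = m * H := by ring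
    linarith
  · -- j < m : look at x₀ + H
    have hmjℝ : (j:ℝ) + 1 ≤ m := by exact_mod_cast hmj
    obtain ⟨hup_low, -⟩ := key (x₀ + H) (by linarith)
    have hA : b m + m * (x₀ + H) ≤ (x₀ + H) ^ α - Real.log C₁ := by
      have := hm_up (x₀ + H); linarith
    have htv := tangent_conv hα.le (by linarith : (0:ℝ) < x₀ + H) hx₀pos.le
    rw [show x₀ - (x₀ + H) = -H by ring] at htv
    -- htv : (x₀+H)^α + α (x₀+H)^(α-1) * (-H) ≤ x₀^α
    have hslope_up : α * (x₀ + H) ^ (α-1) ≤ (m:ℝ) - 1/4 := by linarith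
    have hkey3 : α * (x₀ + H) ^ (α-1) * H ≤ ((m:ℝ) - 1/4) * H :=
      mul_le_mul_of_nonneg_right hslope_up hHpos.le
    have he0 : α * (x₀ + H) ^ (α-1) * (-H) = -(α * (x₀ + H) ^ (α-1) * H) := by ring
    have he1 : ((m:ℝ) - 1/4) * H = m * H - H/4 := by ring
    have he2 : (m:ℝ) * (x₀ + H) - m * x₀ = m * H := by ring
    linarith

/-- Let `w` be a weight function with `w(t) = exp((log t)^α)` for
`t > e`, where `α > 1`. If `α ≥ 2` then `w` is equivalent to a log-tropical weight
function, while if `1 < α < 2` it is not. -/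
theorem example_log_power_weight (α : ℝ) (hα : 1 < α) (w : ℝ → ℝ) (hw : IsWeight w)
    (hform : ∀ t : ℝ, Real.exp 1 < t → w t = Real.exp (Real.log t ^ α)) :
    (2 ≤ α →
      ∃ v : ℝ → ℝ, IsWeight v ∧ LogTropical v ∧
        ∃ C₁ C₂ : ℝ, 0 < C₁ ∧ 0 < C₂ ∧
          ∀ t : ℝ, 0 ≤ t → C₁ * v t ≤ w t ∧ w t ≤ C₂ * v t) ∧
    (α < 2 →
      ¬ ∃ v : ℝ → ℝ, IsWeight v ∧ LogTropical v ∧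
          ∃ C₁ C₂ : ℝ, 0 < C₁ ∧ 0 < C₂ ∧
            ∀ t : ℝ, 0 ≤ t → C₁ * v t ≤ w t ∧ w t ≤ C₂ * v t) := by
  constructor
  · intro hα2
    exact part_one hα hα2 w hw hform
  · intro hα2
    exact part_two hα hα2 w hform
end

section
/- A non-rapid log-convex weight on ℂ is approximable by a holomorphic map if and only if it is equivalent to 1 + t^m for some positive integer m: if w : [0,∞)→(0,∞) is log-convex, non-decreasing, continuous, unbounded, and lim_{t→∞} t^{-k} w(t) < ∞ for some k ∈ ℕ, then w ∈ ℂ_app iff w(t) ≍ 1 + t^m for some m ∈ ℕ. -/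
set_option maxHeartbeats 1600000

open Polynomial Finset Bornology

lemma entire_growth_poly : ∀ (k : ℕ), ∀ (f : ℂ → ℂ), Differentiable ℂ f →
    ∀ M : ℝ, (∀ z, ‖f z‖ ≤ M * max 1 (‖z‖) ^ k) →
    ∃ p : Polynomial ℂ, p.natDegree ≤ k ∧ ∀ z, f z = p.eval z := by
  intro k
  induction k with
  | zero =>
    intro f hf M hM
    have hb : IsBounded (Set.range f) := by
      rw [isBounded_iff_forall_norm_le]
      refine ⟨M, fun x hx => ?_⟩
      obtain ⟨z, rfl⟩ := hx
      simpa using hM z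
    obtain ⟨c, hc⟩ := hf.exists_const_forall_eq_of_bounded hb
    exact ⟨C c, by simp, fun z => by rw [hc z, eval_C]⟩
  | succ k ih =>
    intro f hf M hM
    have hM0 : 0 ≤ M := by
      have := hM 0
      simp at this
      exact le_trans (norm_nonneg _) this
    set c0 : ℝ := ‖f 0‖ with hc0
    have hc00 : 0 ≤ c0 := norm_nonneg _
    set g : ℂ → ℂ := dslope f 0 with hg
    have hgd : Differentiable ℂ g := by
      intro z
      rcases eq_or_ne z 0 with rfl | hz
      · obtain ⟨p, hp⟩ := (hf.analyticAt (0 : ℂ))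
        exact (hp.has_fpower_series_dslope_fslope).analyticAt.differentiableAt
      · exact (differentiableAt_dslope_of_ne hz).mpr (hf z)
    obtain ⟨B, hB⟩ := (isCompact_closedBall (0:ℂ) 1).exists_bound_of_continuousOn
      (hgd.continuous.continuousOn)
    have key : ∀ z : ℂ, 1 < ‖z‖ →
        ‖g z‖ ≤ (M + c0) * ‖z‖ ^ k := by
      intro z hz1
      have hzpos : (0:ℝ) < ‖z‖ := lt_trans one_pos hz1
      have hz : z ≠ 0 := by
        intro h; rw [h] at hz1; simp at hz1; linarith
      have hgz : g z = (f z - f 0) / z := by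
        rw [hg, dslope_of_ne f hz, slope_def_field]
        field_simp
        ring
      rw [hgz, norm_div, div_le_iff₀ hzpos]
      have h1 : ‖f z - f 0‖ ≤ M * ‖z‖ ^ (k+1) + c0 := by
        have ht := norm_sub_le (f z) (f 0)
        have := hM z
        rw [max_eq_right (le_of_lt hz1)] at this
        linarith
      have e : (M + c0) * ‖z‖ ^ k * ‖z‖
          = (M + c0) * ‖z‖ ^ (k+1) := by rw [pow_succ]; ring
      rw [e]
      have hpow : (1:ℝ) ≤ ‖z‖ ^ (k+1) := one_le_pow₀ (le_of_lt hz1)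
      nlinarith
    have hbound : ∀ z : ℂ, ‖g z‖ ≤ (max B (M + c0)) * max 1 (‖z‖) ^ k := by
      intro z
      rcases le_or_gt (‖z‖) 1 with h | h
      · have hz : z ∈ Metric.closedBall (0:ℂ) 1 := by
          simpa [Metric.mem_closedBall, Complex.dist_eq] using h
        have := hB z hz
        have hmax : max 1 (‖z‖) = 1 := max_eq_left h
        rw [hmax, one_pow, mul_one]
        exact le_trans this (le_max_left _ _)
      · have hmax : max 1 (‖z‖) = ‖z‖ := max_eq_right (le_of_lt h)
        rw [hmax]
        refine le_trans (key z h) (mul_le_mul_of_nonneg_right (le_max_right _ _) ?_)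
        positivity
    obtain ⟨p, hpdeg, hpe⟩ := ih g hgd _ hbound
    refine ⟨C (f 0) + X * p, ?_, ?_⟩
    · refine le_trans (natDegree_add_le _ _) ?_
      simp only [natDegree_C, max_le_iff]
      refine ⟨Nat.zero_le _, le_trans (natDegree_mul_le) ?_⟩
      simp only [natDegree_X]
      omega
    · intro z
      have hs := sub_smul_dslope f 0 z
      rw [sub_zero, smul_eq_mul] at hs
      have : f z = f 0 + z * g z := by rw [hg]; linear_combination -hs
      rw [this, hpe z]
      simp

lemma poly_eval_abs_le (p : Polynomial ℂ) (m : ℕ) (hm : p.natDegree ≤ m) (z : ℂ) :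
    ‖p.eval z‖
      ≤ (∑ r ∈ Finset.range (m+1), ‖p.coeff r‖) * max 1 (‖z‖) ^ m := by
  rw [Polynomial.eval_eq_sum_range' (Nat.lt_succ_of_le hm)]
  refine le_trans (norm_sum_le _ _) ?_
  rw [Finset.sum_mul]
  refine Finset.sum_le_sum fun r hr => ?_
  rw [norm_mul, norm_pow]
  refine mul_le_mul_of_nonneg_left ?_ (norm_nonneg _)
  calc ‖z‖ ^ r ≤ max 1 (‖z‖) ^ r := by
        exact pow_le_pow_left₀ (norm_nonneg _) (le_max_right _ _) r
    _ ≤ max 1 (‖z‖) ^ m := by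
        refine pow_le_pow_right₀ (le_max_left _ _) ?_
        exact Nat.lt_succ_iff.mp (Finset.mem_range.mp hr)

/-- A non-rapid log-convex weight `w` on `[0,∞)` is approximable by a
holomorphic map `ℂ → ℂⁿ` (i.e. `∑ |fᵢ(z)| ≍ w(|z|)` for some entire `f₁,…,f_n`) if and
only if `w(t) ≍ 1 + t^m` for some positive integer `m`. -/
theorem nonrapid_approximable_iff_polynomial_weight (w : ℝ → ℝ)
    (hwpos : ∀ t : ℝ, 0 ≤ t → 0 < w t)
    (hmono : MonotoneOn w (Set.Ici 0)) (hcont : ContinuousOn w (Set.Ici 0))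
    (hunb : ∀ M : ℝ, ∃ t : ℝ, 0 ≤ t ∧ M < w t)
    (hconv : ConvexOn ℝ Set.univ (fun x : ℝ => Real.log (w (Real.exp x))))
    (hnonrapid : ∃ k : ℕ, ∃ M : ℝ, ∀ t : ℝ, 1 ≤ t → w t ≤ M * t ^ k) :
    (∃ (n : ℕ) (f : Fin n → ℂ → ℂ), (∀ i, Differentiable ℂ (f i)) ∧
        ∃ C₁ C₂ : ℝ, 0 < C₁ ∧ 0 < C₂ ∧ ∀ z : ℂ,
          C₁ * w (‖z‖) ≤ (∑ i, ‖f i z‖) ∧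
          (∑ i, ‖f i z‖) ≤ C₂ * w (‖z‖)) ↔
      ∃ m : ℕ, 1 ≤ m ∧ ∃ C₁ C₂ : ℝ, 0 < C₁ ∧ 0 < C₂ ∧
        ∀ t : ℝ, 0 ≤ t → C₁ * (1 + t ^ m) ≤ w t ∧ w t ≤ C₂ * (1 + t ^ m) := by
  constructor
  · intro hyp
    obtain ⟨n, f, hdiff, C₁, C₂, hC₁, hC₂, hfw⟩ := hyp
    obtain ⟨k, M, hk⟩ := hnonrapid
    have hw1 : 0 < w 1 := hwpos 1 zero_le_one
    have hw0 : 0 < w 0 := hwpos 0 le_rfl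
    -- growth bound for each component
    have hbd : ∀ i, ∀ z : ℂ, ‖f i z‖
        ≤ (C₂ * (w 1 + |M|)) * max 1 (‖z‖) ^ k := by
      intro i z
      have h1 : ‖f i z‖ ≤ ∑ j, ‖f j z‖ :=
        Finset.single_le_sum (f := fun j => ‖f j z‖) (fun j _ => norm_nonneg _) (Finset.mem_univ i)
      have h2 := (hfw z).2
      have h3 : w (‖z‖) ≤ (w 1 + |M|) * max 1 (‖z‖) ^ k := by
        rcases le_or_gt (‖z‖) 1 with h | h
        · have hle : w (‖z‖) ≤ w 1 :=
            hmono (Set.mem_Ici.mpr (norm_nonneg z)) (Set.mem_Ici.mpr zero_le_one) h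
          have hp1 : (1:ℝ) ≤ max 1 (‖z‖) ^ k := one_le_pow₀ (le_max_left _ _)
          nlinarith [abs_nonneg M]
        · have hle := hk (‖z‖) (le_of_lt h)
          have : max 1 (‖z‖) = ‖z‖ := max_eq_right (le_of_lt h)
          rw [this]
          have hpk : (0:ℝ) < ‖z‖ ^ k := pow_pos (lt_trans one_pos h) k
          nlinarith [le_abs_self M]
      calc ‖f i z‖ ≤ C₂ * w (‖z‖) := le_trans h1 h2
        _ ≤ C₂ * ((w 1 + |M|) * max 1 (‖z‖) ^ k) :=
            mul_le_mul_of_nonneg_left h3 (le_of_lt hC₂)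
        _ = (C₂ * (w 1 + |M|)) * max 1 (‖z‖) ^ k := by ring
    choose P hPdeg hPev using fun i => entire_growth_poly k (f i) (hdiff i) _ (hbd i)
    -- n ≠ 0
    have hn : n ≠ 0 := by
      rintro rfl
      have h0 := (hfw 0).1
      simp only [Finset.univ_eq_empty, Finset.sum_empty, map_zero, norm_zero] at h0
      nlinarith
    haveI : Nonempty (Fin n) := ⟨⟨0, Nat.pos_of_ne_zero hn⟩⟩
    set m := Finset.univ.sup (fun i => (P i).natDegree) with hm
    have hdegle : ∀ i, (P i).natDegree ≤ m := fun i => Finset.le_sup (f := fun i => (P i).natDegree) (Finset.mem_univ i)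
    obtain ⟨j, -, hj⟩ := Finset.exists_mem_eq_sup Finset.univ Finset.univ_nonempty
      (fun i => (P i).natDegree)
    set Ssum : ℝ := ∑ i, ∑ r ∈ Finset.range (m+1), ‖(P i).coeff r‖ with hSsum
    have hSnn : 0 ≤ Ssum := Finset.sum_nonneg fun i _ =>
      Finset.sum_nonneg fun r _ => norm_nonneg _
    have hsum_le : ∀ z : ℂ, (∑ i, ‖f i z‖) ≤ Ssum * max 1 (‖z‖) ^ m := by
      intro z
      rw [hSsum, Finset.sum_mul]
      refine Finset.sum_le_sum fun i _ => ?_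
      rw [hPev i z]
      exact poly_eval_abs_le (P i) m (hdegle i) z
    -- m ≥ 1
    have hm1 : 1 ≤ m := by
      by_contra hc
      have hm0 : m = 0 := by omega
      obtain ⟨t, ht0, htw⟩ := hunb (Ssum / C₁)
      have h1 := (hfw (t : ℂ)).1
      have habs : ‖(t : ℂ)‖ = t := by
        rw [Complex.norm_real, Real.norm_of_nonneg ht0]
      rw [habs] at h1
      have h2 := hsum_le (t : ℂ)
      rw [hm0, pow_zero, mul_one] at h2
      have : C₁ * w t ≤ Ssum := le_trans h1 h2
      rw [div_lt_iff₀ hC₁] at htw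
      nlinarith
    refine ⟨m, hm1, ?_⟩
    -- leading coefficient data
    have hPj : (P j).natDegree = m := hj.symm
    have hPjne : P j ≠ 0 := by
      intro h
      rw [h, natDegree_zero] at hPj
      omega
    set a : ℝ := ‖(P j).leadingCoeff‖ with ha
    have ha0 : 0 < a := by
      rw [ha]
      simpa [norm_pos_iff] using (Polynomial.leadingCoeff_ne_zero.mpr hPjne)
    set q : Polynomial ℂ := (P j).eraseLead with hq
    have hqdeg : q.natDegree ≤ m - 1 := by
      rw [hq]
      have h1 := Polynomial.eraseLead_natDegree_le (P j)
      omega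
    set S' : ℝ := ∑ r ∈ Finset.range ((m-1)+1), ‖q.coeff r‖ with hS'
    have hS'nn : 0 ≤ S' := Finset.sum_nonneg fun r _ => norm_nonneg _
    set T : ℝ := max 1 (2 * S' / a) with hT
    have hT1 : (1:ℝ) ≤ T := le_max_left _ _
    -- lower bound for large t
    have hlow : ∀ t : ℝ, T ≤ t → a / 4 * (1 + t ^ m) ≤ ‖(P j).eval (t : ℂ)‖ := by
      intro t ht
      have ht1 : (1:ℝ) ≤ t := le_trans hT1 ht
      have ht0 : (0:ℝ) < t := lt_of_lt_of_le one_pos ht1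
      have habs : ‖(t : ℂ)‖ = t := by
        rw [Complex.norm_real, Real.norm_of_nonneg ht0.le]
      have hsplit : (P j).eval (t : ℂ) = q.eval (t : ℂ)
          + (P j).leadingCoeff * (t : ℂ) ^ m := by
        conv_lhs => rw [← Polynomial.eraseLead_add_C_mul_X_pow (P j)]
        rw [hPj] at *
        simp [hq]
      have hqb : ‖q.eval (t : ℂ)‖ ≤ S' * t ^ (m-1) := by
        have := poly_eval_abs_le q (m-1) hqdeg (t : ℂ)
        rwa [habs, max_eq_right ht1] at this
      have htm : ‖(P j).leadingCoeff * (t : ℂ) ^ m‖ = a * t ^ m := by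
        rw [norm_mul, norm_pow, habs, ha]
      have hge : a * t ^ m - S' * t ^ (m-1) ≤ ‖(P j).eval (t : ℂ)‖ := by
        rw [hsplit]
        have hkey : a * t ^ m ≤ ‖q.eval (t : ℂ) + (P j).leadingCoeff * (t : ℂ) ^ m‖
            + ‖q.eval (t : ℂ)‖ := by
          calc a * t ^ m
              = ‖(q.eval (t : ℂ) + (P j).leadingCoeff * (t : ℂ) ^ m)
                  - q.eval (t : ℂ)‖ := by rw [add_sub_cancel_left, htm]
            _ ≤ _ := by
                exact
                  norm_sub_le (q.eval (t : ℂ) + (P j).leadingCoeff * (t : ℂ) ^ m) (q.eval (t : ℂ))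
        linarith [hqb]
      have hts : t ^ (m-1) * t = t ^ m := by
        rw [← pow_succ]
        congr 1
        omega
      have h2S : S' ≤ a * t / 2 := by
        have : 2 * S' / a ≤ t := le_trans (le_max_right _ _) ht
        rw [div_le_iff₀ ha0] at this
        nlinarith
      have htm1 : (0:ℝ) < t ^ (m-1) := pow_pos ht0 _
      have h3 : S' * t ^ (m-1) ≤ a / 2 * t ^ m := by
        calc S' * t ^ (m-1) ≤ (a * t / 2) * t ^ (m-1) :=
              mul_le_mul_of_nonneg_right h2S htm1.le
          _ = a / 2 * (t ^ (m-1) * t) := by ring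
          _ = a / 2 * t ^ m := by rw [hts]
      have h4 : (1:ℝ) ≤ t ^ m := one_le_pow₀ ht1
      nlinarith
    clear_value m Ssum a q S' T
    have hT0 : (0:ℝ) ≤ T := le_trans zero_le_one hT1
    have hTm0 : (0:ℝ) < 1 + T ^ m := add_pos_of_pos_of_nonneg one_pos (pow_nonneg hT0 m)
    have h4C : (0:ℝ) < 4 * C₂ := by linarith
    refine ⟨min (a / (4 * C₂)) (w 0 / (1 + T ^ m)), Ssum / C₁ + 1,
      lt_min (div_pos ha0 h4C) (div_pos hw0 hTm0),
      add_pos_of_nonneg_of_pos (div_nonneg hSnn hC₁.le) one_pos, ?_⟩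
    intro t ht0
    have htm0 : (0:ℝ) ≤ 1 + t ^ m := by nlinarith [pow_nonneg ht0 m]
    have habs : ‖(t : ℂ)‖ = t := by
      rw [Complex.norm_real, Real.norm_of_nonneg ht0]
    constructor
    · rcases le_or_gt T t with h | h
      · -- large t
        have h1 := hlow t h
        have h2 : ‖(P j).eval (t : ℂ)‖ ≤ ∑ i, ‖f i (t : ℂ)‖ := by
          rw [← hPev j]
          exact Finset.single_le_sum (f := fun i => ‖f i (t : ℂ)‖)
            (fun i _ => norm_nonneg _) (Finset.mem_univ j)
        have h3 := (hfw (t : ℂ)).2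
        rw [habs] at h3
        have h4 : a / 4 * (1 + t ^ m) ≤ C₂ * w t := le_trans h1 (le_trans h2 h3)
        have h5 : a / (4 * C₂) * (1 + t ^ m) ≤ w t := by
          rw [div_mul_eq_mul_div, div_le_iff₀ h4C]
          nlinarith
        exact le_trans (mul_le_mul_of_nonneg_right (min_le_left _ _) htm0) h5
      · -- small t
        have hw : w 0 ≤ w t := hmono (Set.mem_Ici.mpr le_rfl) (Set.mem_Ici.mpr ht0) ht0
        have hTm : t ^ m ≤ T ^ m := pow_le_pow_left₀ ht0 h.le m
        have h5 : w 0 / (1 + T ^ m) * (1 + t ^ m) ≤ w t := by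
          rw [div_mul_eq_mul_div, div_le_iff₀ hTm0]
          nlinarith
        exact le_trans (mul_le_mul_of_nonneg_right (min_le_right _ _) htm0) h5
    · have h1 := (hfw (t : ℂ)).1
      rw [habs] at h1
      have h2 := hsum_le (t : ℂ)
      rw [habs] at h2
      have h3 : max 1 t ^ m ≤ 1 + t ^ m := by
        rcases le_or_gt t 1 with h | h
        · rw [max_eq_left h]
          rw [one_pow]
          nlinarith [pow_nonneg ht0 m]
        · rw [max_eq_right h.le]
          nlinarith
      have h4 : C₁ * w t ≤ Ssum * (1 + t ^ m) :=
        le_trans h1 (le_trans h2 (mul_le_mul_of_nonneg_left h3 hSnn))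
      have h5 : w t ≤ Ssum / C₁ * (1 + t ^ m) := by
        rw [div_mul_eq_mul_div, le_div_iff₀ hC₁]
        linarith [h4]
      have h6 : Ssum / C₁ * (1 + t ^ m) ≤ (Ssum / C₁ + 1) * (1 + t ^ m) :=
        mul_le_mul_of_nonneg_right (by linarith) htm0
      linarith
  · intro h
    obtain ⟨m, hm, C₁, C₂, hC₁, hC₂, hcmp⟩ := h
    refine ⟨2, ![fun _ => 1, fun z => z ^ m], ?_, 1/C₂, 1/C₁, by positivity, by positivity, ?_⟩
    · intro i
      fin_cases i
      · simpa using differentiable_const (1:ℂ)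
      · simpa using differentiable_pow (𝕜 := ℂ) m
    · intro z
      have h := hcmp (‖z‖) (norm_nonneg z)
      have hsum : (∑ i, ‖![fun _ => (1:ℂ), fun z => z ^ m] i z‖)
          = 1 + ‖z‖ ^ m := by
        simp [Fin.sum_univ_two]
      rw [hsum]
      constructor
      · calc 1/C₂ * w (‖z‖) ≤ 1/C₂ * (C₂ * (1 + ‖z‖ ^ m)) := by
              exact mul_le_mul_of_nonneg_left h.2 (by positivity)
          _ = 1 + ‖z‖ ^ m := by field_simp
      · calc 1 + ‖z‖ ^ m = 1/C₁ * (C₁ * (1 + ‖z‖ ^ m)) := by field_simp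
          _ ≤ 1/C₁ * w (‖z‖) := mul_le_mul_of_nonneg_left h.1 (by positivity)
end
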